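/- arXiv:1311.6416 — 5 statements merged into one kernel-verified Lean document; each statement's English description precedes it below -/
import Mathlib

section
/- Let n ≥ 1, let L̄ be a complex polynomial of degree n, let k ∈ ℕ be such that L̄(j + k) ≠ 0 for every integer j ≥ 1, and let M(z, y₀,…,y_n) be holomorphic in a neighbourhood of 0 ∈ ℂ^{n+2}. Then there exists exactly one formal power series ψ̂ ∈ ℂ[[z]] with ψ̂(0) = 0 satisfying L̄(δ+k)ψ̂ = z · M(z, ψ̂, δψ̂, …, δⁿψ̂), where L̄(δ+k)ψ̂ := Σ_{i} b_i (δ+k)ⁱ ψ̂ for L̄(ξ) = Σ_i b_i ξⁱ. (Each coefficient of ψ̂ is uniquely determined recursively from the previous ones, since L̄(j+k) ≠ 0.) -/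
open PowerSeries

/-- Euler derivative `δu = z·u'`: coefficientwise `(δu)_j = j·u_j`. -/
noncomputable def eulerD (u : PowerSeries ℂ) : PowerSeries ℂ :=
  PowerSeries.mk fun j => (j : ℂ) * PowerSeries.coeff j u

/-- Substitution of one-variable power series (with zero constant terms)
into a multivariate formal power series. -/
noncomputable def substSeries {m : ℕ} (F : MvPowerSeries (Fin m) ℂ)
    (u : Fin m → PowerSeries ℂ) : PowerSeries ℂ :=
  PowerSeries.mk fun j =>
    ∑' d : Fin m →₀ ℕ, MvPowerSeries.coeff d F *
      PowerSeries.coeff j (∏ i : Fin m, (u i) ^ (d i))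

/-- `F` is (the Taylor series at 0 of) a function holomorphic in a neighbourhood
of `0 ∈ ℂ^m`: absolute convergence on some polydisk of positive radius. -/
def ConvNearZero {m : ℕ} (F : MvPowerSeries (Fin m) ℂ) : Prop :=
  ∃ r : ℝ, 0 < r ∧ Summable fun d : Fin m →₀ ℕ =>
    ‖MvPowerSeries.coeff d F‖ * r ^ (d.sum fun _ v => v)

/-- Positive radius of convergence of a formal power series. -/
def PosRadius (u : PowerSeries ℂ) : Prop :=
  ∃ R : ℝ, 0 < R ∧ Summable fun j : ℕ => ‖PowerSeries.coeff j u‖ * R ^ j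

/-- The tuple `(z, φ, δφ, …, δⁿφ)` to be substituted into `F(z,y₀,…,y_n)`. -/
noncomputable def phiArgs (n : ℕ) (φ : PowerSeries ℂ) : Fin (n + 2) → PowerSeries ℂ :=
  fun i => if (i : ℕ) = 0 then PowerSeries.X else eulerD^[(i : ℕ) - 1] φ

/-- Formal partial derivative of a multivariate power series. -/
noncomputable def pderivMv {m : ℕ} (i : Fin m) (F : MvPowerSeries (Fin m) ℂ) :
    MvPowerSeries (Fin m) ℂ :=
  fun d => ((d i : ℂ) + 1) * MvPowerSeries.coeff (d + Finsupp.single i 1) F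


/-- The shifted Euler derivative `(δ + k) u`. -/
noncomputable def dshift (k : ℕ) (u : PowerSeries ℂ) : PowerSeries ℂ :=
  eulerD u + (k : ℂ) • u

/-- `L̄(δ+k)u = Σᵢ bᵢ (δ+k)ⁱ u` for a polynomial `L̄(ξ) = Σᵢ bᵢ ξⁱ`. -/
noncomputable def LpolyOp (L : Polynomial ℂ) (k : ℕ) (u : PowerSeries ℂ) : PowerSeries ℂ :=
  ∑ i ∈ Finset.range (L.natDegree + 1), L.coeff i • (dshift k)^[i] u


section Aux

lemma coeff_eulerD (u : PowerSeries ℂ) (m : ℕ) :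
    PowerSeries.coeff m (eulerD u) = (m : ℂ) * PowerSeries.coeff m u := by
  simp [eulerD]

lemma coeff_eulerD_iterate (s : ℕ) (u : PowerSeries ℂ) (m : ℕ) :
    PowerSeries.coeff m (eulerD^[s] u) = (m : ℂ) ^ s * PowerSeries.coeff m u := by
  induction s with
  | zero => simp
  | succ s ih => rw [Function.iterate_succ_apply', coeff_eulerD, ih]; ring

lemma coeff_dshift_iterate (k i : ℕ) (u : PowerSeries ℂ) (j : ℕ) :
    PowerSeries.coeff j ((dshift k)^[i] u) = ((j : ℂ) + k) ^ i * PowerSeries.coeff j u := by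
  induction i with
  | zero => simp
  | succ i ih =>
    rw [Function.iterate_succ_apply']
    simp only [dshift, map_add, map_smul, coeff_eulerD, ih, smul_eq_mul]
    ring

lemma coeff_LpolyOp (L : Polynomial ℂ) (k : ℕ) (u : PowerSeries ℂ) (j : ℕ) :
    PowerSeries.coeff j (LpolyOp L k u) = L.eval ((j : ℂ) + k) * PowerSeries.coeff j u := by
  unfold LpolyOp
  rw [map_sum, Polynomial.eval_eq_sum_range, Finset.sum_mul]
  refine Finset.sum_congr rfl fun i _ => ?_
  rw [map_smul, coeff_dshift_iterate, smul_eq_mul]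
  ring

lemma X_pow_dvd_sub_of_coeff_eq {f g : PowerSeries ℂ} {N : ℕ}
    (h : ∀ m < N, PowerSeries.coeff m f = PowerSeries.coeff m g) :
    (PowerSeries.X : PowerSeries ℂ) ^ N ∣ f - g := by
  rw [PowerSeries.X_pow_dvd_iff]
  intro m hm
  simp [h m hm]

lemma prod_pow_coeff_congr {m : ℕ} (u v : Fin m → PowerSeries ℂ) (d : Fin m →₀ ℕ) (N : ℕ)
    (h : ∀ i, ∀ t < N, PowerSeries.coeff t (u i) = PowerSeries.coeff t (v i)) :
    ∀ t < N, PowerSeries.coeff t (∏ i, u i ^ d i) =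
      PowerSeries.coeff t (∏ i, v i ^ d i) := by
  have hd : (PowerSeries.X : PowerSeries ℂ) ^ N ∣
      (∏ i, u i ^ d i) - (∏ i, v i ^ d i) := by
    set I : Ideal (PowerSeries ℂ) := Ideal.span {(PowerSeries.X : PowerSeries ℂ) ^ N} with hI
    rw [← Ideal.mem_span_singleton, ← hI, ← Ideal.Quotient.eq]
    rw [map_prod, map_prod]
    refine Finset.prod_congr rfl fun i _ => ?_
    rw [map_pow, map_pow]
    congr 1
    rw [Ideal.Quotient.eq, hI]
    exact Ideal.mem_span_singleton.2 (X_pow_dvd_sub_of_coeff_eq (h i))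
  intro t ht
  have := (PowerSeries.X_pow_dvd_iff.1 hd) t ht
  rw [map_sub, sub_eq_zero] at this
  exact this

lemma coeff_substSeries_congr (n : ℕ) (M : MvPowerSeries (Fin (n + 2)) ℂ)
    (u v : PowerSeries ℂ) (N : ℕ)
    (h : ∀ t < N, PowerSeries.coeff t u = PowerSeries.coeff t v)
    (t : ℕ) (ht : t < N) :
    PowerSeries.coeff t (substSeries M (phiArgs n u)) =
      PowerSeries.coeff t (substSeries M (phiArgs n v)) := by
  unfold substSeries
  rw [PowerSeries.coeff_mk, PowerSeries.coeff_mk]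
  refine tsum_congr fun d => ?_
  congr 1
  refine prod_pow_coeff_congr _ _ d N (fun i s hs => ?_) t ht
  unfold phiArgs
  split
  · rfl
  · rw [coeff_eulerD_iterate, coeff_eulerD_iterate, h s hs]

/-- the recursion map -/
noncomputable def Gmap (n : ℕ) (L : Polynomial ℂ) (k : ℕ)
    (M : MvPowerSeries (Fin (n + 2)) ℂ) (ψ : PowerSeries ℂ) : PowerSeries ℂ :=
  PowerSeries.mk fun j => if j = 0 then 0 else
    PowerSeries.coeff (j - 1) (substSeries M (phiArgs n ψ)) / L.eval ((j : ℂ) + k)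

lemma coeff_Gmap_congr (n : ℕ) (L : Polynomial ℂ) (k : ℕ)
    (M : MvPowerSeries (Fin (n + 2)) ℂ) (u v : PowerSeries ℂ) (j : ℕ)
    (h : ∀ i < j, PowerSeries.coeff i u = PowerSeries.coeff i v) :
    PowerSeries.coeff j (Gmap n L k M u) = PowerSeries.coeff j (Gmap n L k M v) := by
  unfold Gmap
  rw [PowerSeries.coeff_mk, PowerSeries.coeff_mk]
  rcases Nat.eq_zero_or_pos j with hj | hj
  · simp [hj]
  · have hj' : j ≠ 0 := hj.ne'
    simp only [hj', if_false]
    rw [coeff_substSeries_congr n M u v j h (j - 1) (Nat.sub_lt hj one_pos)]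

noncomputable def fixc (G : PowerSeries ℂ → PowerSeries ℂ) : ℕ → ℂ
  | j => PowerSeries.coeff j
      (G (PowerSeries.mk fun i => if _ : i < j then fixc G i else 0))
termination_by j => j

lemma fix_exists_unique (G : PowerSeries ℂ → PowerSeries ℂ)
    (hG : ∀ (u v : PowerSeries ℂ) (j : ℕ),
      (∀ i < j, PowerSeries.coeff i u = PowerSeries.coeff i v) →
      PowerSeries.coeff j (G u) = PowerSeries.coeff j (G v)) :
    ∃! ψ : PowerSeries ℂ, G ψ = ψ := by
  refine ⟨PowerSeries.mk (fixc G), ?_, ?_⟩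
  · ext j
    rw [PowerSeries.coeff_mk, fixc]
    exact hG _ _ j fun i hi => by simp [PowerSeries.coeff_mk, hi]
  · intro u hu
    ext j
    induction j using Nat.strong_induction_on with
    | _ j ih =>
      rw [PowerSeries.coeff_mk, fixc, ← hu]
      exact hG u _ j fun i hi => by
        rw [PowerSeries.coeff_mk, dif_pos hi, ih i hi, PowerSeries.coeff_mk]

end Aux

/-- The prepared equation `L̄(δ+k)ψ̂ = z·M(z, ψ̂, δψ̂, …, δⁿψ̂)` has exactly one formal
power series solution with zero constant term, provided `L̄(j+k) ≠ 0` for all `j ≥ 1`. -/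
theorem prepared_equation_unique_formal_solution (n : ℕ) (hn : 1 ≤ n)
    (L : Polynomial ℂ) (hdeg : L.degree = (n : ℕ)) (k : ℕ)
    (hLk : ∀ j : ℕ, 1 ≤ j → L.eval ((j + k : ℕ) : ℂ) ≠ 0)
    (M : MvPowerSeries (Fin (n + 2)) ℂ) (hM : ConvNearZero M) :
    ∃! ψ : PowerSeries ℂ, PowerSeries.constantCoeff ψ = 0 ∧
      LpolyOp L k ψ = PowerSeries.X * substSeries M (phiArgs n ψ) := by
  have key : ∀ ψ : PowerSeries ℂ,
      (PowerSeries.constantCoeff ψ = 0 ∧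
        LpolyOp L k ψ = PowerSeries.X * substSeries M (phiArgs n ψ)) ↔
      Gmap n L k M ψ = ψ := by
    intro ψ
    constructor
    · rintro ⟨hc, heq⟩
      ext j
      unfold Gmap
      rw [PowerSeries.coeff_mk]
      rcases Nat.eq_zero_or_pos j with hj | hj
      · subst hj
        simpa [PowerSeries.coeff_zero_eq_constantCoeff] using hc.symm
      · obtain ⟨t, rfl⟩ := Nat.exists_eq_succ_of_ne_zero hj.ne'
        have hne : L.eval (((t + 1 : ℕ) : ℂ) + (k : ℂ)) ≠ 0 := by
          have h := hLk (t + 1) (by omega)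
          convert h using 2
          push_cast
          ring
        have hcoeff := congrArg (PowerSeries.coeff (t + 1)) heq
        rw [coeff_LpolyOp, PowerSeries.coeff_succ_X_mul] at hcoeff
        have hne0 : (t + 1 : ℕ) ≠ 0 := by omega
        rw [if_neg hne0]
        have h2 : (t + 1) - 1 = t := by omega
        rw [h2, div_eq_iff hne, ← hcoeff]
        push_cast
        ring
    · intro hfix
      have hc : PowerSeries.constantCoeff ψ = 0 := by
        rw [← PowerSeries.coeff_zero_eq_constantCoeff_apply, ← hfix]
        simp [Gmap]
      refine ⟨hc, ?_⟩
      ext j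
      rw [coeff_LpolyOp]
      rcases Nat.eq_zero_or_pos j with hj | hj
      · subst hj
        rw [PowerSeries.coeff_zero_eq_constantCoeff_apply, hc, mul_zero]
        rw [PowerSeries.coeff_zero_eq_constantCoeff_apply, map_mul]
        simp
      · obtain ⟨t, rfl⟩ := Nat.exists_eq_succ_of_ne_zero hj.ne'
        rw [PowerSeries.coeff_succ_X_mul]
        have hne : L.eval (((t + 1 : ℕ) : ℂ) + (k : ℂ)) ≠ 0 := by
          have h := hLk (t + 1) (by omega)
          convert h using 2
          push_cast
          ring
        conv_lhs => rw [← hfix]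
        unfold Gmap
        rw [PowerSeries.coeff_mk]
        have hne0 : (t + 1 : ℕ) ≠ 0 := by omega
        rw [if_neg hne0]
        have h2 : (t + 1) - 1 = t := by omega
        rw [h2, mul_div_cancel₀ _ hne]
  have hG : ∀ (u v : PowerSeries ℂ) (j : ℕ),
      (∀ i < j, PowerSeries.coeff i u = PowerSeries.coeff i v) →
      PowerSeries.coeff j (Gmap n L k M u) = PowerSeries.coeff j (Gmap n L k M v) :=
    fun u v j h => coeff_Gmap_congr n L k M u v j h
  obtain ⟨ψ, h1, h2⟩ := fix_exists_unique (Gmap n L k M) hG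
  exact ⟨ψ, (key ψ).mpr h1, fun y hy => h2 y ((key y).mp hy)⟩
end

section
/- Let n ≥ 1 and let P be a complex polynomial of degree exactly n − 1 such that P(j) ≠ 0 for every integer j ≥ 1. Then the image of the set Hⁿ = { (a_j)_{j≥1} : Σ_{j≥1} jⁿ |a_j| < ∞ } under the map (a_j)_{j≥1} ↦ (P(j)·a_j)_{j≥1} equals H¹ = { (b_j)_{j≥1} : Σ_{j≥1} j |b_j| < ∞ }; in particular the map from Hⁿ to H⁰ = { (b_j)_{j≥1} : Σ_{j≥1} |b_j| < ∞ } is not surjective. -/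
/-- The coefficient space `Hᵐ` of the Banach space of power series `Σ_{j≥1} aⱼ zʲ`
with `Σ_{j≥1} jᵐ|aⱼ| < ∞`; the sequence `(aⱼ)_{j≥1}` is encoded as `a : ℕ → ℂ`
with `a j` standing for `a_{j+1}`. -/
def Hspace (m : ℕ) : Set (ℕ → ℂ) :=
  {a : ℕ → ℂ | Summable fun j : ℕ => ((j + 1 : ℕ) : ℝ) ^ m * ‖a j‖}

open Filter Polynomial

lemma tendsto_aux (P : Polynomial ℂ) (d : ℕ) (hd : P.natDegree ≤ d) :
    Tendsto (fun j : ℕ => P.eval ((j + 1 : ℕ) : ℂ) / ((j + 1 : ℕ) : ℂ) ^ d) atTop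
      (nhds (P.coeff d)) := by
  have hz : ∀ j : ℕ, ((j + 1 : ℕ) : ℂ) ≠ 0 := by
    intro j; exact Nat.cast_ne_zero.mpr (Nat.succ_ne_zero j)
  have hinv : Tendsto (fun j : ℕ => (((j + 1 : ℕ) : ℂ))⁻¹) atTop (nhds 0) := by
    rw [tendsto_zero_iff_norm_tendsto_zero]
    have hR : Tendsto (fun j : ℕ => (((j + 1 : ℕ) : ℝ))⁻¹) atTop (nhds 0) :=
      tendsto_inv_atTop_zero.comp (tendsto_natCast_atTop_atTop.comp (tendsto_add_atTop_nat 1))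
    have he : (fun j : ℕ => ‖(((j + 1 : ℕ) : ℂ))⁻¹‖) = fun j : ℕ => (((j + 1 : ℕ) : ℝ))⁻¹ := by
      funext j; rw [norm_inv, Complex.norm_natCast]
    rw [he]; exact hR
  have key : ∀ j : ℕ, P.eval ((j + 1 : ℕ) : ℂ) / ((j + 1 : ℕ) : ℂ) ^ d =
      ∑ i ∈ Finset.range (d + 1), P.coeff i * ((((j + 1 : ℕ) : ℂ))⁻¹) ^ (d - i) := by
    intro j
    rw [Polynomial.eval_eq_sum_range' (Nat.lt_succ_of_le hd), Finset.sum_div]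
    refine Finset.sum_congr rfl fun i hi => ?_
    rw [Finset.mem_range, Nat.lt_succ_iff] at hi
    rw [mul_div_assoc, inv_pow]
    congr 1
    rw [pow_sub₀ _ (hz j) hi, mul_inv, inv_inv, inv_mul_eq_div]
  simp only [key]
  have hlim : (P.coeff d) = ∑ i ∈ Finset.range (d + 1), P.coeff i * (0 : ℂ) ^ (d - i) := by
    rw [Finset.sum_eq_single d]
    · simp
    · intro i hi hne
      rw [Finset.mem_range, Nat.lt_succ_iff] at hi
      have : d - i ≠ 0 := Nat.sub_ne_zero_of_lt (lt_of_le_of_ne hi hne)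
      simp [zero_pow this]
    · intro h; exact absurd (Finset.self_mem_range_succ d) h
  rw [hlim]
  exact tendsto_finset_sum _ fun i _ =>
    (tendsto_const_nhds.mul (hinv.pow _))

lemma lower_bound (P : Polynomial ℂ) (d : ℕ) (hdeg : P.degree = (d : ℕ))
    (hP : ∀ j : ℕ, P.eval ((j + 1 : ℕ) : ℂ) ≠ 0) :
    ∃ c : ℝ, 0 < c ∧ ∀ j : ℕ, c * ((j + 1 : ℕ) : ℝ) ^ d ≤ ‖P.eval ((j + 1 : ℕ) : ℂ)‖ := by
  have hnd : P.natDegree = d := Polynomial.natDegree_eq_of_degree_eq_some hdeg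
  have hP0 : P ≠ 0 := fun h => by simp [h] at hdeg
  have hL : 0 < ‖P.coeff d‖ := by
    rw [norm_pos_iff]
    rw [← hnd]
    exact Polynomial.leadingCoeff_ne_zero.mpr hP0
  set L := ‖P.coeff d‖
  have ht := (tendsto_aux P d hnd.le).norm
  have hev : ∀ᶠ j : ℕ in atTop, L / 2 ≤ ‖P.eval ((j + 1 : ℕ) : ℂ) / ((j + 1 : ℕ) : ℂ) ^ d‖ :=
    ht.eventually (eventually_ge_nhds (by linarith))
  obtain ⟨N, hN⟩ := hev.exists_forall_of_atTop
  set g : ℕ → ℝ := fun j => ‖P.eval ((j + 1 : ℕ) : ℂ)‖ / ((j + 1 : ℕ) : ℝ) ^ d with hg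
  have hx : ∀ j : ℕ, (0 : ℝ) < ((j + 1 : ℕ) : ℝ) ^ d := fun j =>
    pow_pos (by exact_mod_cast Nat.succ_pos j) d
  have hgpos : ∀ j, 0 < g j := fun j => div_pos (norm_pos_iff.mpr (hP j)) (hx j)
  have hnorm : ∀ j : ℕ, ‖P.eval ((j + 1 : ℕ) : ℂ) / ((j + 1 : ℕ) : ℂ) ^ d‖ = g j := by
    intro j
    rw [norm_div, norm_pow, Complex.norm_natCast]
  refine ⟨min (L / 2) ((Finset.range (N + 1)).inf' ⟨0, Finset.mem_range.mpr (Nat.succ_pos N)⟩ g), ?_, ?_⟩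
  · refine lt_min (by linarith) ?_
    exact (Finset.lt_inf'_iff _).2 fun i _ => hgpos i
  · intro j
    have hle : min (L / 2)
        ((Finset.range (N + 1)).inf' ⟨0, Finset.mem_range.mpr (Nat.succ_pos N)⟩ g) ≤ g j := by
      rcases le_or_gt N j with h | h
      · refine le_trans (min_le_left _ _) ?_
        have := hN j h
        rwa [hnorm] at this
      · exact le_trans (min_le_right _ _)
          (Finset.inf'_le _ (Finset.mem_range.mpr (Nat.lt_succ_of_lt h)))
    calc min (L / 2)
          ((Finset.range (N + 1)).inf' ⟨0, Finset.mem_range.mpr (Nat.succ_pos N)⟩ g) *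
          ((j + 1 : ℕ) : ℝ) ^ d
        ≤ g j * ((j + 1 : ℕ) : ℝ) ^ d := by
          exact mul_le_mul_of_nonneg_right hle (hx j).le
      _ = ‖P.eval ((j + 1 : ℕ) : ℂ)‖ := div_mul_cancel₀ _ (hx j).ne'

lemma upper_bound (P : Polynomial ℂ) (d : ℕ) (hd : P.natDegree ≤ d) :
    ∃ C : ℝ, ∀ j : ℕ, ‖P.eval ((j + 1 : ℕ) : ℂ)‖ ≤ C * ((j + 1 : ℕ) : ℝ) ^ d := by
  refine ⟨∑ i ∈ Finset.range (d + 1), ‖P.coeff i‖, fun j => ?_⟩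
  have hx1 : (1 : ℝ) ≤ ((j + 1 : ℕ) : ℝ) := by exact_mod_cast Nat.succ_le_succ (Nat.zero_le j)
  rw [Polynomial.eval_eq_sum_range' (Nat.lt_succ_of_le hd), Finset.sum_mul]
  refine le_trans (norm_sum_le _ _) (Finset.sum_le_sum fun i hi => ?_)
  rw [Finset.mem_range, Nat.lt_succ_iff] at hi
  rw [norm_mul, norm_pow]
  have : ‖((j + 1 : ℕ) : ℂ)‖ = ((j + 1 : ℕ) : ℝ) := by
    rw [Complex.norm_natCast]
  rw [this]
  exact mul_le_mul_of_nonneg_left (pow_le_pow_right₀ hx1 hi) (norm_nonneg _)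

/-- For a polynomial `P` of degree exactly `n − 1` with `P(j) ≠ 0` for all integers `j ≥ 1`,
the image of `Hⁿ` under `(aⱼ)_{j≥1} ↦ (P(j)·aⱼ)_{j≥1}` equals `H¹`; in particular the map
from `Hⁿ` to `H⁰` is not surjective. -/
theorem mul_by_poly_image_not_surjective (n : ℕ) (hn : 1 ≤ n)
    (P : Polynomial ℂ) (hdeg : P.degree = ((n - 1 : ℕ) : ℕ))
    (hP : ∀ j : ℕ, 1 ≤ j → P.eval (j : ℂ) ≠ 0) :
    ((fun (a : ℕ → ℂ) (j : ℕ) => P.eval ((j + 1 : ℕ) : ℂ) * a j) '' Hspace n = Hspace 1) ∧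
    ¬ Set.SurjOn (fun (a : ℕ → ℂ) (j : ℕ) => P.eval ((j + 1 : ℕ) : ℂ) * a j)
        (Hspace n) (Hspace 0) := by
  obtain ⟨d, rfl⟩ : ∃ d, n = d + 1 := ⟨n - 1, (Nat.succ_pred_eq_of_pos hn).symm⟩
  rw [Nat.add_sub_cancel] at hdeg
  have hP' : ∀ j : ℕ, P.eval ((j + 1 : ℕ) : ℂ) ≠ 0 := fun j =>
    hP (j + 1) (Nat.succ_le_succ (Nat.zero_le j))
  obtain ⟨c, hc, hlow⟩ := lower_bound P d hdeg hP'
  obtain ⟨C, hup⟩ := upper_bound P d (Polynomial.natDegree_eq_of_degree_eq_some hdeg).le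
  have hxpos : ∀ j : ℕ, (0 : ℝ) < ((j + 1 : ℕ) : ℝ) := fun j => by
    exact_mod_cast Nat.succ_pos j
  have himg : ((fun (a : ℕ → ℂ) (j : ℕ) => P.eval ((j + 1 : ℕ) : ℂ) * a j) ''
      Hspace (d + 1) = Hspace 1) := by
    ext b
    constructor
    · rintro ⟨a, ha, rfl⟩
      have ha' : Summable fun j : ℕ => ((j + 1 : ℕ) : ℝ) ^ (d + 1) * ‖a j‖ := ha
      show Summable fun j : ℕ => ((j + 1 : ℕ) : ℝ) ^ 1 * ‖P.eval ((j + 1 : ℕ) : ℂ) * a j‖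
      refine Summable.of_nonneg_of_le (fun j => ?_) (fun j => ?_) (ha'.mul_left C)
      · positivity
      · set x := ((j + 1 : ℕ) : ℝ) with hx
        have h1 : ‖P.eval ((j + 1 : ℕ) : ℂ)‖ ≤ C * x ^ d := hup j
        have h2 := mul_le_mul_of_nonneg_left h1
          (mul_nonneg (hxpos j).le (norm_nonneg (a j)))
        calc x ^ 1 * ‖P.eval ((j + 1 : ℕ) : ℂ) * a j‖
            = x * ‖a j‖ * ‖P.eval ((j + 1 : ℕ) : ℂ)‖ := by rw [pow_one, norm_mul]; ring
          _ ≤ x * ‖a j‖ * (C * x ^ d) := h2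
          _ = C * (x ^ (d + 1) * ‖a j‖) := by rw [pow_succ]; ring
    · intro hb
      have hb' : Summable fun j : ℕ => ((j + 1 : ℕ) : ℝ) ^ 1 * ‖b j‖ := hb
      refine ⟨fun j => b j / P.eval ((j + 1 : ℕ) : ℂ), ?_, ?_⟩
      · show Summable fun j : ℕ =>
          ((j + 1 : ℕ) : ℝ) ^ (d + 1) * ‖b j / P.eval ((j + 1 : ℕ) : ℂ)‖
        refine Summable.of_nonneg_of_le (fun j => ?_) (fun j => ?_) (hb'.mul_left c⁻¹)
        · positivity
        · set x := ((j + 1 : ℕ) : ℝ) with hx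
          have hxp : (0 : ℝ) < x := hxpos j
          have hkey : c⁻¹ * (x ^ 1 * ‖b j‖) = x ^ (d + 1) * (‖b j‖ / (c * x ^ d)) := by
            rw [pow_one, pow_succ]
            field_simp
          rw [norm_div, hkey]
          gcongr
          exact hlow j
      · funext j
        exact mul_div_cancel₀ (b j) (hP' j)
  refine ⟨himg, fun hs => ?_⟩
  set b : ℕ → ℂ := fun j => (((j + 1 : ℕ) : ℂ))⁻¹ ^ 2 with hbdef
  have hnorm : ∀ j : ℕ, ‖b j‖ = (((j + 1 : ℕ) : ℝ))⁻¹ ^ 2 := fun j => by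
    rw [hbdef, norm_pow, norm_inv, Complex.norm_natCast]
  have hb0 : b ∈ Hspace 0 := by
    show Summable fun j : ℕ => ((j + 1 : ℕ) : ℝ) ^ 0 * ‖b j‖
    have : Summable fun j : ℕ => 1 / ((j + 1 : ℕ) : ℝ) ^ 2 :=
      (summable_nat_add_iff (f := fun n : ℕ => 1 / (n : ℝ) ^ 2) 1).mpr
        (Real.summable_one_div_nat_pow.mpr one_lt_two)
    refine this.congr fun j => ?_
    rw [hnorm j, pow_zero, one_mul, one_div, inv_pow]
  have hb1 : b ∉ Hspace 1 := by
    intro h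
    have h' : Summable fun j : ℕ => (((j + 1 : ℕ) : ℝ))⁻¹ := by
      refine (h : Summable _).congr fun j => ?_
      rw [hnorm j, pow_one, sq]
      rw [← mul_assoc, mul_inv_cancel₀ (hxpos j).ne', one_mul]
    exact Real.not_summable_natCast_inv
      ((summable_nat_add_iff (f := fun n : ℕ => ((n : ℝ))⁻¹) 1).mp h')
  exact hb1 (himg ▸ hs hb0)
end

section
/- Let n ≥ 1, let L̄ be a complex polynomial of degree exactly n, let k ∈ ℕ be such that L̄(j+k) ≠ 0 for every integer j ≥ 1, and set σ = inf_{j≥1} |L̄(j+k)|/jⁿ (which is positive). Let M(z, y₀,…,y_n) = Σ_{p≥0} Σ_{q=(q₀,…,q_n)∈ℤ₊^{n+1}} α_{p,q} z^p y₀^{q₀}⋯y_n^{q_n} be holomorphic in a neighbourhood of 0 ∈ ℂ^{n+2}, and let M̃(z,w) = Σ_{p,q} |α_{p,q}| z^p w^{q₀+⋯+q_n}, which is holomorphic in a neighbourhood of (0,0) ∈ ℂ². Let ψ̂ = Σ_{j≥1} c_j z^j be the unique formal power series with zero constant term satisfying L̄(δ+k)ψ̂ = z·M(z, ψ̂, δψ̂,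 …, δⁿψ̂). Then the equation σ·δⁿv = z·M̃(z, δⁿv) has a unique formal power series solution ψ = Σ_{j≥1} C_j z^j with zero constant term; this ψ has positive radius of convergence; all its coefficients C_j are nonnegative reals; and |c_j| ≤ C_j for every j ≥ 1 (so ψ is a majorant series for ψ̂). -/
open PowerSeries

/-- The majorant series `M̃(z,w) = Σ_{p,q} |α_{p,q}| z^p w^{q₀+⋯+q_n}` built from
`M(z,y₀,…,y_n) = Σ_{p,q} α_{p,q} z^p y₀^{q₀}⋯y_n^{q_n}`; the two variables `(z,w)` are
indexed by `Fin 2`, `z` at 0 and `w` at 1. -/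
noncomputable def majorantSeries (n : ℕ) (M : MvPowerSeries (Fin (n + 2)) ℂ) :
    MvPowerSeries (Fin 2) ℂ :=
  fun d : Fin 2 →₀ ℕ =>
    ∑' q : {q : Fin (n + 1) →₀ ℕ // (q.sum fun _ v => v) = d 1},
      (‖MvPowerSeries.coeff
          (Finsupp.mapDomain Fin.succ (q : Fin (n + 1) →₀ ℕ) + Finsupp.single 0 (d 0)) M‖ : ℂ)


namespace MEAux

/-! ### nonneg real complex numbers -/

def NNR (z : ℂ) : Prop := z.im = 0 ∧ 0 ≤ z.re

lemma NNR.zero : NNR 0 := by simp [NNR]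
lemma NNR.one : NNR 1 := by simp [NNR]
lemma NNR.add {a b : ℂ} (ha : NNR a) (hb : NNR b) : NNR (a + b) :=
  ⟨by simp [Complex.add_im, ha.1, hb.1], by simpa using add_nonneg ha.2 hb.2⟩
lemma NNR.mul {a b : ℂ} (ha : NNR a) (hb : NNR b) : NNR (a * b) :=
  ⟨by simp [Complex.mul_im, ha.1, hb.1], by
    simp [Complex.mul_re, ha.1, hb.1]; exact mul_nonneg ha.2 hb.2⟩
lemma NNR.mul_re {a b : ℂ} (ha : a.im = 0) (hb : b.im = 0) : (a * b).re = a.re * b.re := by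
  simp [Complex.mul_re, ha, hb]
lemma NNR.ofReal {x : ℝ} (hx : 0 ≤ x) : NNR (x : ℂ) := ⟨by simp, by simpa using hx⟩
lemma NNR.sum {ι : Type*} {s : Finset ι} {f : ι → ℂ} (h : ∀ i ∈ s, NNR (f i)) :
    NNR (∑ i ∈ s, f i) := by
  classical
  induction s using Finset.induction_on with
  | empty => simpa using NNR.zero
  | @insert a s' hx ih =>
      rw [Finset.sum_insert hx]
      exact (h a (by simp)).add (ih fun i hi => h i (by simp [hi]))
lemma NNR.pow {a : ℂ} (ha : NNR a) (s : ℕ) : NNR (a ^ s) := by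
  induction s with
  | zero => simpa using NNR.one
  | succ s ih => rw [pow_succ]; exact ih.mul ha
lemma NNR.eq_ofReal {z : ℂ} (h : NNR z) : z = (z.re : ℝ) :=
  (Complex.ext (by simp) (by simp [h.1])).symm
lemma NNR.natPow (m i : ℕ) : NNR (((m : ℂ)) ^ i) := by
  have : ((m : ℂ)) ^ i = (((m : ℝ) ^ i : ℝ) : ℂ) := by push_cast; ring
  rw [this]
  exact NNR.ofReal (by positivity)
lemma NNR.norm_eq {z : ℂ} (h : NNR z) : ‖z‖ = z.re := by
  rw [h.eq_ofReal]
  simp [h.2]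

def NNS (A : PowerSeries ℂ) : Prop := ∀ m, NNR (PowerSeries.coeff m A)

lemma NNS.mul {A B : PowerSeries ℂ} (hA : NNS A) (hB : NNS B) : NNS (A * B) := by
  intro m
  rw [PowerSeries.coeff_mul]
  exact NNR.sum fun p _ => (hA p.1).mul (hB p.2)
lemma NNS.one : NNS 1 := by
  intro m; rw [PowerSeries.coeff_one]; split <;> simp [NNR.one, NNR.zero]
lemma NNS.pow {A : PowerSeries ℂ} (hA : NNS A) (s : ℕ) : NNS (A ^ s) := by
  induction s with
  | zero => simpa using NNS.one
  | succ s ih => rw [pow_succ]; exact ih.mul hA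
lemma NNS.X : NNS PowerSeries.X := by
  intro m; rw [PowerSeries.coeff_X]; split <;> simp [NNR.one, NNR.zero]
lemma NNS.prod {ι : Type*} (s : Finset ι) (b : ι → PowerSeries ℂ) (e : ι → ℕ)
    (hb : ∀ i ∈ s, NNS (b i)) : NNS (∏ i ∈ s, b i ^ e i) := by
  refine Finset.prod_induction _ NNS (fun _ _ => NNS.mul) NNS.one fun i hi => (hb i hi).pow _

/-! ### coefficients of eulerD iterates -/

lemma coeff_eulerD (m : ℕ) (u : PowerSeries ℂ) :
    PowerSeries.coeff m (eulerD u) = (m : ℂ) * PowerSeries.coeff m u := by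
  simp [eulerD]

lemma coeff_eulerD_iter (i m : ℕ) (u : PowerSeries ℂ) :
    PowerSeries.coeff m (eulerD^[i] u) = (m : ℂ) ^ i * PowerSeries.coeff m u := by
  induction i with
  | zero => simp
  | succ i ih =>
      rw [Function.iterate_succ_apply', coeff_eulerD, ih, pow_succ]; ring

/-! ### finite supports for substitution -/

noncomputable def boxF (m j : ℕ) : Finset (Fin m →₀ ℕ) :=
  Finset.Iic (Finsupp.equivFunOnFinite.symm fun _ => j)

lemma mem_boxF {m j : ℕ} {d : Fin m →₀ ℕ} : d ∈ boxF m j ↔ ∀ i, d i ≤ j := by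
  simp [boxF, Finset.mem_Iic, Finsupp.le_def]

lemma apply_le_degree {m : ℕ} (d : Fin m →₀ ℕ) (i : Fin m) :
    d i ≤ d.sum fun _ v => v := by
  rw [Finsupp.sum_fintype _ _ (fun _ => rfl)]
  exact Finset.single_le_sum (fun _ _ => Nat.zero_le _) (Finset.mem_univ i)

lemma degree_eq_sum {m : ℕ} (d : Fin m →₀ ℕ) :
    (d.sum fun _ v => v) = ∑ i : Fin m, d i :=
  Finsupp.sum_fintype _ _ (fun _ => rfl)

lemma boxF_mem_of_deg_le {m j : ℕ} {d : Fin m →₀ ℕ} (h : (d.sum fun _ v => v) ≤ j) :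
    d ∈ boxF m j :=
  mem_boxF.2 fun i => le_trans (apply_le_degree d i) h

lemma coeff_prod_pow_eq_zero {m : ℕ} {u : Fin m → PowerSeries ℂ}
    (hu : ∀ i, PowerSeries.constantCoeff (u i) = 0) (d : Fin m →₀ ℕ) {j : ℕ}
    (hj : j < d.sum fun _ v => v) :
    PowerSeries.coeff j (∏ i : Fin m, (u i) ^ (d i)) = 0 := by
  have hdvd : (PowerSeries.X : PowerSeries ℂ) ^ (d.sum fun _ v => v) ∣
      ∏ i : Fin m, (u i) ^ (d i) := by
    rw [degree_eq_sum, ← Finset.prod_pow_eq_pow_sum]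
    exact Finset.prod_dvd_prod_of_dvd _ _ fun i _ =>
      pow_dvd_pow_of_dvd (PowerSeries.X_dvd_iff.2 (hu i)) _
  exact PowerSeries.X_pow_dvd_iff.1 hdvd j hj

lemma coeff_substSeries {m : ℕ} (F : MvPowerSeries (Fin m) ℂ) {u : Fin m → PowerSeries ℂ}
    (hu : ∀ i, PowerSeries.constantCoeff (u i) = 0) (j : ℕ)
    {s : Finset (Fin m →₀ ℕ)} (hs : ∀ d : Fin m →₀ ℕ, (d.sum fun _ v => v) ≤ j → d ∈ s) :
    PowerSeries.coeff j (substSeries F u) =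
      ∑ d ∈ s, MvPowerSeries.coeff d F *
        PowerSeries.coeff j (∏ i : Fin m, (u i) ^ (d i)) := by
  rw [substSeries, PowerSeries.coeff_mk]
  refine tsum_eq_sum fun d hd => ?_
  have : j < d.sum fun _ v => v := by
    by_contra h
    exact hd (hs d (le_of_not_gt h))
  rw [coeff_prod_pow_eq_zero hu d this, mul_zero]

lemma coeff_X_pow_mul_pow_eq_zero {w : PowerSeries ℂ}
    (hw : PowerSeries.constantCoeff w = 0) {t e0 s : ℕ} (h : t < e0 + s) :
    PowerSeries.coeff t (PowerSeries.X ^ e0 * w ^ s) = 0 := by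
  have hdvd : (PowerSeries.X : PowerSeries ℂ) ^ (e0 + s) ∣ PowerSeries.X ^ e0 * w ^ s := by
    rw [pow_add]
    exact mul_dvd_mul dvd_rfl (pow_dvd_pow_of_dvd (PowerSeries.X_dvd_iff.2 hw) _)
  exact PowerSeries.X_pow_dvd_iff.1 hdvd t h

/-! ### the Qset and majorant coefficients -/

noncomputable def Qset (n s : ℕ) : Finset (Fin (n + 1) →₀ ℕ) :=
  (boxF (n + 1) s).filter fun q => (q.sum fun _ v => v) = s

lemma mem_Qset {n s : ℕ} {q : Fin (n + 1) →₀ ℕ} :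
    q ∈ Qset n s ↔ (q.sum fun _ v => v) = s := by
  constructor
  · exact fun h => (Finset.mem_filter.1 h).2
  · intro h
    exact Finset.mem_filter.2 ⟨mem_boxF.2 fun i => le_trans (apply_le_degree q i) h.le, h⟩

lemma cons_eq (n p : ℕ) (q : Fin (n + 1) →₀ ℕ) :
    Finsupp.mapDomain Fin.succ q + Finsupp.single 0 p = Finsupp.cons p q := by
  ext i
  refine Fin.cases ?_ (fun i => ?_) i
  · rw [Finsupp.add_apply, Finsupp.cons_zero, Finsupp.mapDomain_notin_range]
    · simp
    · rintro ⟨x, hx⟩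
      exact Fin.succ_ne_zero x hx
  · rw [Finsupp.add_apply, Finsupp.mapDomain_apply (Fin.succ_injective _), Finsupp.cons_succ]
    simp [Finsupp.single_apply, (Fin.succ_ne_zero i).symm]

lemma sum_cons (n p : ℕ) (q : Fin (n + 1) →₀ ℕ) :
    ((Finsupp.cons p q).sum fun _ v => v) = p + (q.sum fun _ v => v) := by
  rw [degree_eq_sum, degree_eq_sum, Fin.sum_univ_succ, Finsupp.cons_zero]
  simp [Finsupp.cons_succ]

lemma sum_tail {n : ℕ} (e : Fin (n + 2) →₀ ℕ) :
    ((Finsupp.tail e).sum fun _ v => v) = ∑ i : Fin (n + 1), e i.succ := by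
  rw [degree_eq_sum]
  exact Finset.sum_congr rfl fun i _ => Finsupp.tail_apply i e

noncomputable def pairF (a b : ℕ) : Fin 2 →₀ ℕ :=
  Finsupp.equivFunOnFinite.symm ![a, b]
lemma pairF_zero (a b : ℕ) : pairF a b 0 = a := rfl
lemma pairF_one (a b : ℕ) : pairF a b 1 = b := rfl
lemma eq_pairF (d : Fin 2 →₀ ℕ) : d = pairF (d 0) (d 1) := by
  ext i
  refine Fin.cases ?_ (fun i => ?_) i
  · rfl
  · have : i = 0 := Subsingleton.elim i 0
    subst this
    rfl

lemma majorantSeries_eq (n : ℕ) (M : MvPowerSeries (Fin (n + 2)) ℂ) (d : Fin 2 →₀ ℕ) :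
    MvPowerSeries.coeff d (majorantSeries n M) =
      ((∑ q ∈ Qset n (d 1), ‖MvPowerSeries.coeff (Finsupp.cons (d 0) q) M‖ : ℝ) : ℂ) := by
  have hfin : (Qset n (d 1) : Set (Fin (n + 1) →₀ ℕ)).Finite := (Qset n (d 1)).finite_toSet
  have hsub : {q : Fin (n + 1) →₀ ℕ | (q.sum fun _ v => v) = d 1} = ↑(Qset n (d 1)) := by
    ext q; simp [mem_Qset]
  haveI : Fintype {q : Fin (n + 1) →₀ ℕ // (q.sum fun _ v => v) = d 1} :=
    (hsub.symm ▸ hfin).fintype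
  rw [MvPowerSeries.coeff_apply]
  rw [show majorantSeries n M d =
    ∑' q : {q : Fin (n + 1) →₀ ℕ // (q.sum fun _ v => v) = d 1},
      (‖MvPowerSeries.coeff
          (Finsupp.mapDomain Fin.succ (q : Fin (n + 1) →₀ ℕ) + Finsupp.single 0 (d 0)) M‖ : ℂ)
    from rfl]
  rw [tsum_fintype,
    ← Finset.sum_subtype (Qset n (d 1)) (fun q => mem_Qset)
      (fun q => (‖MvPowerSeries.coeff
        (Finsupp.mapDomain Fin.succ q + Finsupp.single 0 (d 0)) M‖ : ℂ))]
  push_cast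
  refine Finset.sum_congr rfl fun q _ => ?_
  rw [cons_eq]

/-! ### domination and truncated equality of coefficients -/

def Dom (t : ℕ) (u w : PowerSeries ℂ) : Prop :=
  ∀ m ≤ t, ‖PowerSeries.coeff m u‖ ≤ (PowerSeries.coeff m w).re

lemma Dom.mul {t : ℕ} {u₁ u₂ w₁ w₂ : PowerSeries ℂ} (h1 : Dom t u₁ w₁) (h2 : Dom t u₂ w₂)
    (hw1 : NNS w₁) (hw2 : NNS w₂) : Dom t (u₁ * u₂) (w₁ * w₂) := by
  intro m hm
  rw [PowerSeries.coeff_mul, PowerSeries.coeff_mul, Complex.re_sum]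
  refine le_trans (norm_sum_le _ _) (Finset.sum_le_sum fun p hp => ?_)
  have hpm := Finset.HasAntidiagonal.mem_antidiagonal.1 hp
  have h1' := h1 p.1 (le_trans (Nat.le.intro hpm) hm)
  have h2' := h2 p.2 (le_trans (Nat.le.intro (Nat.add_comm p.1 p.2 ▸ hpm)) hm)
  rw [norm_mul, NNR.mul_re (hw1 p.1).1 (hw2 p.2).1]
  exact mul_le_mul h1' h2' (norm_nonneg _) (le_trans (norm_nonneg _) h1')

lemma Dom.one (t : ℕ) : Dom t 1 1 := by
  intro m _; rw [PowerSeries.coeff_one]; split <;> simp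

lemma Dom.pow {t : ℕ} {u w : PowerSeries ℂ} (h : Dom t u w) (hw : NNS w) (s : ℕ) :
    Dom t (u ^ s) (w ^ s) := by
  induction s with
  | zero => simpa using Dom.one t
  | succ s ih => rw [pow_succ, pow_succ]; exact ih.mul h (hw.pow s) hw

lemma Dom.prod {ι : Type*} (s : Finset ι) (a b : ι → PowerSeries ℂ) (e : ι → ℕ) (t : ℕ)
    (hd : ∀ i ∈ s, Dom t (a i) (b i)) (hb : ∀ i ∈ s, NNS (b i)) :
    Dom t (∏ i ∈ s, a i ^ e i) (∏ i ∈ s, b i ^ e i) := by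
  classical
  induction s using Finset.induction_on with
  | empty => simpa using Dom.one t
  | @insert i s his ih =>
      rw [Finset.prod_insert his, Finset.prod_insert his]
      exact ((hd i (by simp)).pow (hb i (by simp)) (e i)).mul
        (ih (fun i hi => hd i (by simp [hi])) (fun i hi => hb i (by simp [hi])))
        ((hb i (by simp)).pow (e i))
        (NNS.prod s b e fun i hi => hb i (by simp [hi]))

def EqC (t : ℕ) (A B : PowerSeries ℂ) : Prop :=
  ∀ m ≤ t, PowerSeries.coeff m A = PowerSeries.coeff m B

lemma EqC.mul {t : ℕ} {u₁ u₂ w₁ w₂ : PowerSeries ℂ} (h1 : EqC t u₁ w₁) (h2 : EqC t u₂ w₂) :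
    EqC t (u₁ * u₂) (w₁ * w₂) := by
  intro m hm
  rw [PowerSeries.coeff_mul, PowerSeries.coeff_mul]
  refine Finset.sum_congr rfl fun p hp => ?_
  have hpm := Finset.HasAntidiagonal.mem_antidiagonal.1 hp
  rw [h1 p.1 (le_trans (Nat.le.intro hpm) hm),
    h2 p.2 (le_trans (Nat.le.intro (Nat.add_comm p.1 p.2 ▸ hpm)) hm)]

lemma EqC.pow {t : ℕ} {u w : PowerSeries ℂ} (h : EqC t u w) (s : ℕ) :
    EqC t (u ^ s) (w ^ s) := by
  induction s with
  | zero => intro m _; rfl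
  | succ s ih => rw [pow_succ, pow_succ]; exact ih.mul h

/-! ### partial sums -/

noncomputable def Psum (r : ℝ) (t : ℕ) (B : PowerSeries ℂ) : ℝ :=
  ∑ m ∈ Finset.range (t + 1), (PowerSeries.coeff m B).re * r ^ m

lemma Psum_nonneg {r : ℝ} (hr : 0 ≤ r) {t : ℕ} {B : PowerSeries ℂ} (hB : NNS B) :
    0 ≤ Psum r t B :=
  Finset.sum_nonneg fun m _ => mul_nonneg (hB m).2 (pow_nonneg hr m)

lemma Psum_mul_le {r : ℝ} (hr : 0 ≤ r) {t : ℕ} {B₁ B₂ : PowerSeries ℂ}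
    (hB1 : NNS B₁) (hB2 : NNS B₂) :
    Psum r t (B₁ * B₂) ≤ Psum r t B₁ * Psum r t B₂ := by
  classical
  have key : Psum r t (B₁ * B₂) = ∑ p ∈ (Finset.range (t+1)).biUnion Finset.HasAntidiagonal.antidiagonal,
      ((PowerSeries.coeff p.1 B₁).re * r ^ p.1) *
        ((PowerSeries.coeff p.2 B₂).re * r ^ p.2) := by
    rw [Psum, Finset.sum_biUnion]
    · refine Finset.sum_congr rfl fun m _ => ?_
      rw [PowerSeries.coeff_mul, Complex.re_sum, Finset.sum_mul]
      refine Finset.sum_congr rfl fun p hp => ?_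
      have hpm := Finset.HasAntidiagonal.mem_antidiagonal.1 hp
      rw [NNR.mul_re (hB1 p.1).1 (hB2 p.2).1, ← hpm, pow_add]; ring
    · intro a _ b _ hab
      simp only [Finset.disjoint_left]
      intro p hpa hpb
      exact hab (by rw [← Finset.HasAntidiagonal.mem_antidiagonal.1 hpa, ← Finset.HasAntidiagonal.mem_antidiagonal.1 hpb])
  rw [key, Psum, Psum, Finset.sum_mul_sum]
  rw [← Finset.sum_product']
  refine Finset.sum_le_sum_of_subset_of_nonneg ?_ ?_
  · intro p hp
    rw [Finset.mem_biUnion] at hp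
    obtain ⟨m, hm, hpm⟩ := hp
    have := Finset.HasAntidiagonal.mem_antidiagonal.1 hpm
    rw [Finset.mem_range] at hm
    rw [Finset.mem_product, Finset.mem_range, Finset.mem_range]
    omega
  · intro p _ _
    exact mul_nonneg (mul_nonneg (hB1 p.1).2 (pow_nonneg hr p.1))
      (mul_nonneg (hB2 p.2).2 (pow_nonneg hr p.2))

lemma Psum_one (r : ℝ) (t : ℕ) : Psum r t 1 = 1 := by
  rw [Psum, Finset.sum_eq_single 0]
  · simp
  · intro m _ hm
    rw [PowerSeries.coeff_one, if_neg hm]; simp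
  · simp

lemma Psum_pow_le {r : ℝ} (hr : 0 ≤ r) {t : ℕ} {B : PowerSeries ℂ} (hB : NNS B) (s : ℕ) :
    Psum r t (B ^ s) ≤ (Psum r t B) ^ s := by
  induction s with
  | zero => simp [Psum_one]
  | succ s ih =>
      rw [pow_succ, pow_succ]
      exact le_trans (Psum_mul_le hr (hB.pow s) hB)
        (mul_le_mul_of_nonneg_right ih (Psum_nonneg hr hB))

lemma Psum_X_le {r : ℝ} (hr : 0 ≤ r) (t : ℕ) : Psum r t PowerSeries.X ≤ r := by
  rw [Psum]
  refine le_trans (Finset.sum_le_sum (g := fun m => if m = 1 then r else 0) fun m _ => ?_) ?_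
  · by_cases h : m = 1
    · subst h; simp [PowerSeries.coeff_X]
    · rw [PowerSeries.coeff_X, if_neg h]; simp [h]
  · rw [Finset.sum_ite_eq' (Finset.range (t + 1)) 1 fun _ => r]
    split <;> simp [hr]

/-! ### the operator coefficients and positivity of σ -/

lemma coeff_dshift_iter (k i j : ℕ) (u : PowerSeries ℂ) :
    PowerSeries.coeff j ((dshift k)^[i] u) =
      (((j + k : ℕ) : ℂ)) ^ i * PowerSeries.coeff j u := by
  induction i with
  | zero => simp
  | succ i ih =>
      rw [Function.iterate_succ_apply', dshift, map_add, map_smul, pow_succ]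
      rw [show PowerSeries.coeff j (eulerD ((dshift k)^[i] u))
          = (j : ℂ) * PowerSeries.coeff j ((dshift k)^[i] u) by simp [eulerD]]
      rw [ih, smul_eq_mul]
      push_cast
      ring

lemma coeff_LpolyOp (L : Polynomial ℂ) (k j : ℕ) (u : PowerSeries ℂ) :
    PowerSeries.coeff j (LpolyOp L k u) =
      Polynomial.eval (((j + k : ℕ) : ℂ)) L * PowerSeries.coeff j u := by
  rw [LpolyOp, map_sum, Polynomial.eval_eq_sum_range, Finset.sum_mul]
  refine Finset.sum_congr rfl fun i _ => ?_
  rw [map_smul, coeff_dshift_iter]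
  simp [mul_assoc]

/-- the positivity of σ -/
lemma sigma_pos (n : ℕ) (hn : 1 ≤ n) (L : Polynomial ℂ) (hdeg : L.degree = (n : ℕ)) (k : ℕ)
    (hLk : ∀ j : ℕ, 1 ≤ j → L.eval ((j + k : ℕ) : ℂ) ≠ 0) :
    0 < ⨅ j : ℕ, ‖L.eval ((j + 1 + k : ℕ) : ℂ)‖ / ((j + 1 : ℕ) : ℝ) ^ n := by
  have hnd : L.natDegree = n := Polynomial.natDegree_eq_of_degree_eq_some hdeg
  have hL0 : L ≠ 0 := by
    intro h
    rw [h, Polynomial.degree_zero] at hdeg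
    exact absurd hdeg.symm (by simp)
  set f : ℕ → ℝ := fun j => ‖L.eval ((j + 1 + k : ℕ) : ℂ)‖ / ((j + 1 : ℕ) : ℝ) ^ n with hf
  have hfpos : ∀ j, 0 < f j := by
    intro j
    apply div_pos
    · exact norm_pos_iff.2 (hLk (j + 1) (by omega))
    · positivity
  -- the limit of f is the norm of the leading coefficient
  have hlead : 0 < ‖L.leadingCoeff‖ := norm_pos_iff.2 (by simp [Polynomial.leadingCoeff_ne_zero, hL0])
  have htend : Filter.Tendsto f Filter.atTop (nhds ‖L.leadingCoeff‖) := by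
    set x : ℕ → ℂ := fun j => ((j + 1 : ℕ) : ℂ) with hxdef
    have hx0 : ∀ j, x j ≠ 0 := fun j => Nat.cast_ne_zero.2 (Nat.succ_ne_zero j)
    have hxnorm : ∀ j, ‖x j‖ = ((j + 1 : ℕ) : ℝ) := fun j => by
      simpa [hxdef] using Complex.norm_natCast (j + 1)
    have hinv : Filter.Tendsto (fun j => (x j)⁻¹) Filter.atTop (nhds 0) := by
      rw [tendsto_zero_iff_norm_tendsto_zero]
      have : (fun j => ‖(x j)⁻¹‖) = fun j : ℕ => 1 / ((j : ℝ) + 1) := by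
        funext j
        rw [norm_inv, hxnorm, one_div]
        push_cast
        rfl
      rw [this]
      exact tendsto_one_div_add_atTop_nhds_zero_nat
    have hratio : Filter.Tendsto (fun j => ((j + 1 + k : ℕ) : ℂ) / x j) Filter.atTop (nhds 1) := by
      have heq : (fun j => ((j + 1 + k : ℕ) : ℂ) / x j) = fun j => 1 + (k : ℂ) * (x j)⁻¹ := by
        funext j
        field_simp [hx0 j]
        push_cast [hxdef]
        ring
      rw [heq]
      have := (tendsto_const_nhds (x := (1 : ℂ)) (f := Filter.atTop (α := ℕ))).add
        ((tendsto_const_nhds (x := (k : ℂ)) (f := Filter.atTop (α := ℕ))).mul hinv)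
      simpa using this
    have hev : f = fun j => ‖∑ i ∈ Finset.range (n + 1),
        L.coeff i * (((j + 1 + k : ℕ) : ℂ) ^ i / (x j) ^ n)‖ := by
      funext j
      have : ∑ i ∈ Finset.range (n + 1), L.coeff i * (((j + 1 + k : ℕ) : ℂ) ^ i / (x j) ^ n)
          = (∑ i ∈ Finset.range (n + 1), L.coeff i * ((j + 1 + k : ℕ) : ℂ) ^ i) / (x j) ^ n := by
        rw [Finset.sum_div]
        exact Finset.sum_congr rfl fun i _ => (mul_div_assoc _ _ _).symm
      rw [this, norm_div, norm_pow, hxnorm, hf]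
      rw [← hnd, ← Polynomial.eval_eq_sum_range, hnd]
    have hsum : Filter.Tendsto (fun j => ∑ i ∈ Finset.range (n + 1),
        L.coeff i * (((j + 1 + k : ℕ) : ℂ) ^ i / (x j) ^ n)) Filter.atTop
        (nhds L.leadingCoeff) := by
      have hlc : L.leadingCoeff = ∑ i ∈ Finset.range (n + 1),
          (if i = n then L.coeff n else 0) := by
        rw [Finset.sum_ite_eq' (Finset.range (n + 1)) n fun _ => L.coeff n,
          if_pos (by simp [Finset.mem_range])]
        rw [Polynomial.leadingCoeff, hnd]
      rw [hlc]
      refine tendsto_finset_sum _ fun i hi => ?_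
      rw [Finset.mem_range] at hi
      rcases eq_or_lt_of_le (Nat.lt_succ_iff.1 hi) with heqn | hlt
      · subst heqn
        rw [if_pos rfl]
        have heq : (fun j => L.coeff i * (((j + 1 + k : ℕ) : ℂ) ^ i / (x j) ^ i))
            = fun j => L.coeff i * (((j + 1 + k : ℕ) : ℂ) / x j) ^ i := by
          funext j; rw [div_pow]
        rw [heq]
        have := (tendsto_const_nhds (x := L.coeff i) (f := Filter.atTop (α := ℕ))).mul
          (hratio.pow i)
        simpa using this
      · rw [if_neg (Nat.ne_of_lt hlt)]
        have hbound : ∀ j : ℕ, ‖L.coeff i * (((j + 1 + k : ℕ) : ℂ) ^ i / (x j) ^ n)‖ ≤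
            ‖L.coeff i‖ * ((k : ℝ) + 1) ^ i * (1 / ((j : ℝ) + 1)) := by
          intro j
          rw [norm_mul, norm_div, norm_pow, norm_pow, hxnorm]
          have hjk : ‖((j + 1 + k : ℕ) : ℂ)‖ = ((j + 1 + k : ℕ) : ℝ) := by
            simpa using Complex.norm_natCast (j + 1 + k)
          rw [hjk, mul_assoc]
          refine mul_le_mul_of_nonneg_left ?_ (norm_nonneg _)
          have hb1 : ((j + 1 + k : ℕ) : ℝ) ^ i ≤ (((k : ℝ) + 1) * ((j + 1 : ℕ) : ℝ)) ^ i := by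
            apply pow_le_pow_left₀ (by positivity)
            push_cast
            nlinarith [Nat.cast_nonneg (α := ℝ) j, Nat.cast_nonneg (α := ℝ) k]
          calc ((j + 1 + k : ℕ) : ℝ) ^ i / ((j + 1 : ℕ) : ℝ) ^ n
              ≤ (((k : ℝ) + 1) * ((j + 1 : ℕ) : ℝ)) ^ i / ((j + 1 : ℕ) : ℝ) ^ n :=
                (div_le_div_iff_of_pos_right (by positivity)).2 hb1
            _ = ((k : ℝ) + 1) ^ i * (((j + 1 : ℕ) : ℝ) ^ i / ((j + 1 : ℕ) : ℝ) ^ n) := by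
                rw [mul_pow]; ring
            _ ≤ ((k : ℝ) + 1) ^ i * (1 / ((j : ℝ) + 1)) := by
                refine mul_le_mul_of_nonneg_left ?_ (by positivity)
                rw [div_le_div_iff₀ (by positivity) (by positivity), one_mul]
                have h2 : ((j + 1 : ℕ) : ℝ) ^ i * ((j : ℝ) + 1) = ((j + 1 : ℕ) : ℝ) ^ (i + 1) := by
                  push_cast; ring
                rw [h2]
                apply pow_le_pow_right₀ (by push_cast; linarith [Nat.cast_nonneg (α := ℝ) j])
                omega
        have hg : Filter.Tendsto (fun j : ℕ => ‖L.coeff i‖ * ((k : ℝ) + 1) ^ i *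
            (1 / ((j : ℝ) + 1))) Filter.atTop (nhds 0) := by
          have := tendsto_one_div_add_atTop_nhds_zero_nat.const_mul
            (‖L.coeff i‖ * ((k : ℝ) + 1) ^ i)
          simpa [mul_assoc] using this
        exact squeeze_zero_norm hbound hg
    rw [hev]
    exact (Continuous.tendsto continuous_norm _).comp hsum
  obtain ⟨N, hN⟩ := (htend.eventually (eventually_ge_nhds
    (show ‖L.leadingCoeff‖ / 2 < ‖L.leadingCoeff‖ by linarith))).exists_forall_of_atTop
  set c : ℝ := min (‖L.leadingCoeff‖ / 2) ((Finset.range (N + 1)).inf' (by simp) f) with hc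
  have hcpos : 0 < c := by
    apply lt_min (by linarith)
    apply (Finset.lt_inf'_iff _).2
    exact fun j _ => hfpos j
  refine lt_of_lt_of_le hcpos (le_ciInf fun j => ?_)
  rcases le_or_gt N j with h | h
  · exact le_trans (min_le_left _ _) (hN j h)
  · exact le_trans (min_le_right _ _) (Finset.inf'_le _ (by simp [Finset.mem_range]; omega))

/-- the key regrouping identity -/
lemma regroup (n : ℕ) (M : MvPowerSeries (Fin (n + 2)) ℂ) (w : PowerSeries ℂ)
    (hw : PowerSeries.constantCoeff w = 0) (t : ℕ) (g : PowerSeries ℂ → ℕ → ℝ)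
    (hg0 : ∀ s e0, e0 + s > t → g (PowerSeries.X ^ e0 * w ^ s) t = 0) :
    ∑ e ∈ boxF (n + 2) t, ‖MvPowerSeries.coeff e M‖ *
        g (PowerSeries.X ^ (e 0) * w ^ (∑ i : Fin (n + 1), e i.succ)) t =
      ∑ d ∈ boxF 2 t, (∑ q ∈ Qset n (d 1), ‖MvPowerSeries.coeff (Finsupp.cons (d 0) q) M‖) *
        g (PowerSeries.X ^ (d 0) * w ^ (d 1)) t := by
  classical
  -- restrict to the filtered sets
  rw [← Finset.sum_filter_of_ne (s := boxF (n + 2) t)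
      (p := fun e => e 0 + (∑ i : Fin (n + 1), e i.succ) ≤ t)
      (by
        intro e _ hne
        by_contra hgt
        exact hne (by rw [hg0 _ _ (by omega), mul_zero]))]
  rw [← Finset.sum_filter_of_ne (s := boxF 2 t)
      (p := fun d => d 0 + d 1 ≤ t)
      (by
        intro d _ hne
        by_contra hgt
        exact hne (by rw [hg0 _ _ (by omega), mul_zero]))]
  have hbij : ∑ p ∈ (((boxF 2 t).filter fun d => d 0 + d 1 ≤ t).sigma fun d => Qset n (d 1)),
      ‖MvPowerSeries.coeff (Finsupp.cons (p.1 0) p.2) M‖ *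
        g (PowerSeries.X ^ (p.1 0) * w ^ (p.1 1)) t =
      ∑ e ∈ (boxF (n + 2) t).filter fun e => e 0 + (∑ i : Fin (n + 1), e i.succ) ≤ t,
        ‖MvPowerSeries.coeff e M‖ *
          g (PowerSeries.X ^ (e 0) * w ^ (∑ i : Fin (n + 1), e i.succ)) t := by
    refine Finset.sum_nbij' (i := fun p => Finsupp.cons (p.1 0) p.2)
      (j := fun e => ⟨pairF (e 0) (∑ i : Fin (n + 1), e i.succ), Finsupp.tail e⟩)
      ?_ ?_ ?_ ?_ ?_
    · rintro ⟨d, q⟩ hp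
      dsimp only at hp ⊢
      rw [Finset.mem_sigma] at hp
      obtain ⟨hd, hq⟩ := hp
      rw [Finset.mem_filter] at hd
      have hqsum := mem_Qset.1 hq
      have hd2 : d 0 + d 1 ≤ t := hd.2
      have hq2 : (q.sum fun _ v => v) = d 1 := hqsum
      rw [Finset.mem_filter]
      constructor
      · refine mem_boxF.2 fun i => ?_
        refine Fin.cases ?_ (fun i => ?_) i
        · rw [Finsupp.cons_zero]; omega
        · rw [Finsupp.cons_succ]
          exact le_trans (le_trans (apply_le_degree q i) hqsum.le) (by omega)
      · have : (∑ i : Fin (n + 1), (Finsupp.cons (d 0) q) i.succ) = d 1 := by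
          rw [← hqsum, degree_eq_sum]
          exact Finset.sum_congr rfl fun i _ => Finsupp.cons_succ i (d 0) q
        rw [Finsupp.cons_zero, this]
        omega
    · intro e he
      rw [Finset.mem_filter] at he
      obtain ⟨hebox, hesum⟩ := he
      rw [Finset.mem_sigma]
      constructor
      · rw [Finset.mem_filter]
        refine ⟨mem_boxF.2 fun i => ?_, ?_⟩
        · refine Fin.cases ?_ (fun i => ?_) i
          · rw [pairF_zero]; omega
          · have : i = 0 := Subsingleton.elim i 0
            subst this
            rw [show (0 : Fin 1).succ = 1 from rfl, pairF_one]
            omega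
        · rw [pairF_zero, pairF_one]; exact hesum
      · rw [mem_Qset, sum_tail, pairF_one]
    · rintro ⟨d, q⟩ hp
      dsimp only at hp ⊢
      rw [Finset.mem_sigma] at hp
      obtain ⟨hd, hq⟩ := hp
      have hqsum := mem_Qset.1 hq
      have h0 : (Finsupp.cons (d 0) q) 0 = d 0 := Finsupp.cons_zero _ _
      have hs : (∑ i : Fin (n + 1), (Finsupp.cons (d 0) q) i.succ) = d 1 := by
        rw [← hqsum, degree_eq_sum]
        exact Finset.sum_congr rfl fun i _ => Finsupp.cons_succ i (d 0) q
      refine Sigma.ext ?_ ?_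
      · rw [h0, hs]
        exact (eq_pairF d).symm
      · rw [Finsupp.tail_cons]
    · intro e _
      exact Finsupp.cons_tail e
    · rintro ⟨d, q⟩ hp
      dsimp only at hp ⊢
      rw [Finset.mem_sigma] at hp
      have hqsum := mem_Qset.1 hp.2
      have h0 : (Finsupp.cons (d 0) q) 0 = d 0 := Finsupp.cons_zero _ _
      have hs : (∑ i : Fin (n + 1), (Finsupp.cons (d 0) q) i.succ) = d 1 := by
        rw [← hqsum, degree_eq_sum]
        exact Finset.sum_congr rfl fun i _ => Finsupp.cons_succ i (d 0) q
      rw [h0, hs]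
  rw [← hbij, Finset.sum_sigma]
  exact Finset.sum_congr rfl fun d _ => by
    rw [Finset.sum_mul]
-- NEW: construction
noncomputable def solC (n : ℕ) (σ : ℝ) (G : MvPowerSeries (Fin 2) ℂ) : ℕ → ℂ
  | 0 => 0
  | (j+1) => ((σ : ℂ) * ((j + 1 : ℕ) : ℂ) ^ n)⁻¹ *
      PowerSeries.coeff j (substSeries G
        ![PowerSeries.X, PowerSeries.mk fun m =>
          if _h : m < j + 1 then ((m : ℂ)) ^ n * solC n σ G m else 0])
  termination_by j => j

lemma solC_zero (n : ℕ) (σ : ℝ) (G : MvPowerSeries (Fin 2) ℂ) :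
    solC n σ G 0 = 0 := by
  rw [solC]

noncomputable def vtr (n : ℕ) (σ : ℝ) (G : MvPowerSeries (Fin 2) ℂ) (j : ℕ) : PowerSeries ℂ :=
  PowerSeries.mk fun m => if _h : m < j then ((m : ℂ)) ^ n * solC n σ G m else 0

lemma solC_succ (n : ℕ) (σ : ℝ) (G : MvPowerSeries (Fin 2) ℂ) (j : ℕ) :
    solC n σ G (j + 1) = ((σ : ℂ) * ((j + 1 : ℕ) : ℂ) ^ n)⁻¹ *
      PowerSeries.coeff j (substSeries G ![PowerSeries.X, vtr n σ G (j + 1)]) := by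
  rw [solC, vtr]

noncomputable def psiS (n : ℕ) (σ : ℝ) (G : MvPowerSeries (Fin 2) ℂ) : PowerSeries ℂ :=
  PowerSeries.mk (solC n σ G)
noncomputable def vS (n : ℕ) (σ : ℝ) (G : MvPowerSeries (Fin 2) ℂ) : PowerSeries ℂ :=
  eulerD^[n] (psiS n σ G)

lemma coeff_vS (n : ℕ) (σ : ℝ) (G : MvPowerSeries (Fin 2) ℂ) (m : ℕ) :
    PowerSeries.coeff m (vS n σ G) = ((m : ℂ)) ^ n * solC n σ G m := by
  rw [vS, coeff_eulerD_iter, psiS, PowerSeries.coeff_mk]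

lemma constCoeff_vS (n : ℕ) (σ : ℝ) (G : MvPowerSeries (Fin 2) ℂ) :
    PowerSeries.constantCoeff (vS n σ G) = 0 := by
  rw [← PowerSeries.coeff_zero_eq_constantCoeff, coeff_vS]
  rw [solC]
  simp

lemma constCoeff_vtr (n : ℕ) (σ : ℝ) (G : MvPowerSeries (Fin 2) ℂ) (j : ℕ) :
    PowerSeries.constantCoeff (vtr n σ G j) = 0 := by
  rw [← PowerSeries.coeff_zero_eq_constantCoeff, vtr, PowerSeries.coeff_mk]
  split
  · rw [solC]; simp
  · rfl

lemma args2_constCoeff {w : PowerSeries ℂ} (hw : PowerSeries.constantCoeff w = 0) :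
    ∀ i : Fin 2, PowerSeries.constantCoeff (![PowerSeries.X, w] i) = 0 := by
  intro i
  refine Fin.cases ?_ (fun i => ?_) i
  · simp
  · have : i = 0 := Subsingleton.elim i 0
    subst this
    simpa using hw

lemma prod2 (w₁ w₂ : PowerSeries ℂ) (d : Fin 2 →₀ ℕ) :
    (∏ i : Fin 2, (![w₁, w₂] i) ^ (d i)) = w₁ ^ (d 0) * w₂ ^ (d 1) := by
  rw [Fin.prod_univ_two]
  rfl

/-- substitution only depends on coefficients up to j -/
lemma coeff_subst2_congr (G : MvPowerSeries (Fin 2) ℂ) {w w' : PowerSeries ℂ}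
    (hw : PowerSeries.constantCoeff w = 0) (hw' : PowerSeries.constantCoeff w' = 0)
    {j : ℕ} (h : EqC j w w') :
    PowerSeries.coeff j (substSeries G ![PowerSeries.X, w]) =
      PowerSeries.coeff j (substSeries G ![PowerSeries.X, w']) := by
  rw [coeff_substSeries G (args2_constCoeff hw) j (s := boxF 2 j)
      (fun d hd => boxF_mem_of_deg_le hd),
    coeff_substSeries G (args2_constCoeff hw') j (s := boxF 2 j)
      (fun d hd => boxF_mem_of_deg_le hd)]
  refine Finset.sum_congr rfl fun d _ => ?_
  rw [prod2, prod2]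
  congr 1
  exact ((EqC.pow (fun m _ => rfl) (d 0)).mul (h.pow (d 1))) j (le_refl j)

lemma EqC_vtr (n : ℕ) (σ : ℝ) (G : MvPowerSeries (Fin 2) ℂ) (j : ℕ) :
    EqC j (vtr n σ G (j + 1)) (vS n σ G) := by
  intro m hm
  rw [vtr, PowerSeries.coeff_mk, coeff_vS, dif_pos (by omega)]

/-- the fundamental equation satisfied by psiS -/
lemma psiS_eq (n : ℕ) (σ : ℝ) (G : MvPowerSeries (Fin 2) ℂ) (hσ : σ ≠ 0) :
    (σ : ℂ) • vS n σ G =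
      PowerSeries.X * substSeries G ![PowerSeries.X, vS n σ G] := by
  ext j
  rcases j with _ | j
  · simp [map_smul, PowerSeries.coeff_zero_eq_constantCoeff, map_mul, constCoeff_vS]
  · rw [map_smul, smul_eq_mul, PowerSeries.coeff_succ_X_mul, coeff_vS, solC_succ,
      ← coeff_subst2_congr G (constCoeff_vtr n σ G (j + 1)) (constCoeff_vS n σ G)
        (EqC_vtr n σ G j)]
    rw [← mul_assoc, ← mul_assoc, mul_inv_cancel₀, one_mul]
    apply mul_ne_zero
    · exact_mod_cast Complex.ofReal_ne_zero.2 hσ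
    · exact pow_ne_zero _ (Nat.cast_ne_zero.2 (Nat.succ_ne_zero j))

/-- uniqueness -/
lemma psiS_unique (n : ℕ) (σ : ℝ) (G : MvPowerSeries (Fin 2) ℂ) (hσ : σ ≠ 0)
    (ψ' : PowerSeries ℂ) (h0 : PowerSeries.constantCoeff ψ' = 0)
    (heq : (σ : ℂ) • eulerD^[n] ψ' =
      PowerSeries.X * substSeries G ![PowerSeries.X, eulerD^[n] ψ']) :
    ψ' = psiS n σ G := by
  have key : ∀ j, PowerSeries.coeff j ψ' = solC n σ G j := by
    intro j
    induction j using Nat.strong_induction_on with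
    | _ j ih =>
      rcases j with _ | j
      · rw [PowerSeries.coeff_zero_eq_constantCoeff, h0, solC]
      · have hv0 : PowerSeries.constantCoeff (eulerD^[n] ψ') = 0 := by
          rw [← PowerSeries.coeff_zero_eq_constantCoeff, coeff_eulerD_iter,
            PowerSeries.coeff_zero_eq_constantCoeff, h0, mul_zero]
        have hvtr : EqC j (eulerD^[n] ψ') (vtr n σ G (j + 1)) := by
          intro m hm
          rw [coeff_eulerD_iter, vtr, PowerSeries.coeff_mk, dif_pos (by omega), ih m (by omega)]
        have hcoeff := congrArg (PowerSeries.coeff (j + 1)) heq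
        rw [map_smul, smul_eq_mul, PowerSeries.coeff_succ_X_mul, coeff_eulerD_iter,
          coeff_subst2_congr G hv0 (constCoeff_vtr n σ G (j + 1)) hvtr] at hcoeff
        have hne : ((σ : ℂ) * ((j + 1 : ℕ) : ℂ) ^ n) ≠ 0 := by
          apply mul_ne_zero
          · exact_mod_cast Complex.ofReal_ne_zero.2 hσ
          · exact pow_ne_zero _ (Nat.cast_ne_zero.2 (Nat.succ_ne_zero j))
        rw [solC_succ]
        refine mul_left_cancel₀ hne ?_
        rw [← mul_assoc, mul_inv_cancel₀ hne, one_mul]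
        push_cast at hcoeff ⊢
        linear_combination hcoeff
  ext j
  rw [key j, psiS, PowerSeries.coeff_mk]

/-- nonnegativity of the constructed coefficients -/
lemma NNR_solC (n : ℕ) (σ : ℝ) (G : MvPowerSeries (Fin 2) ℂ) (hσ : 0 < σ)
    (hG : ∀ d, NNR (MvPowerSeries.coeff d G)) (j : ℕ) : NNR (solC n σ G j) := by
  induction j using Nat.strong_induction_on with
  | _ j ih =>
    rcases j with _ | j
    · rw [solC]; exact NNR.zero
    · rw [solC_succ]
      have hinv : NNR ((σ : ℂ) * ((j + 1 : ℕ) : ℂ) ^ n)⁻¹ := by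
        have : ((σ : ℂ) * ((j + 1 : ℕ) : ℂ) ^ n)⁻¹ =
            (((σ * ((j + 1 : ℕ) : ℝ) ^ n)⁻¹ : ℝ) : ℂ) := by
          push_cast
          ring
        rw [this]
        apply NNR.ofReal
        positivity
      refine hinv.mul ?_
      rw [coeff_substSeries G (args2_constCoeff (constCoeff_vtr n σ G (j + 1))) j
        (s := boxF 2 j) (fun d hd => boxF_mem_of_deg_le hd)]
      refine NNR.sum fun d _ => (hG d).mul ?_
      rw [prod2]
      have hvtr : NNS (vtr n σ G (j + 1)) := by
        intro m
        rw [vtr, PowerSeries.coeff_mk]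
        split
        · next h =>
            refine NNR.mul ?_ (ih m (by omega))
            have : ((m : ℂ)) ^ n = (((m : ℝ) ^ n : ℝ) : ℂ) := by push_cast; ring
            rw [this]
            exact NNR.ofReal (by positivity)
        · exact NNR.zero
      exact (NNS.mul (NNS.X.pow (d 0)) (hvtr.pow (d 1))) j
lemma prod_maj (n : ℕ) (w : PowerSeries ℂ) (e : Fin (n + 2) →₀ ℕ) :
    (∏ i : Fin (n + 2),
        (if (i : ℕ) = 0 then PowerSeries.X else w) ^ (e i)) =
      PowerSeries.X ^ (e 0) * w ^ (∑ i : Fin (n + 1), e i.succ) := by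
  rw [Fin.prod_univ_succ, if_pos (show ((0 : Fin (n + 2)) : ℕ) = 0 from rfl)]
  congr 1
  rw [← Finset.prod_pow_eq_pow_sum]
  refine Finset.prod_congr rfl fun i _ => ?_
  rw [if_neg (by simp [Fin.val_succ])]

lemma Gre_bound (n : ℕ) (M : MvPowerSeries (Fin (n + 2)) ℂ) (r : ℝ) (hr : 0 ≤ r)
    (hsum : Summable fun e : Fin (n + 2) →₀ ℕ =>
      ‖MvPowerSeries.coeff e M‖ * r ^ (e.sum fun _ v => v)) (p s : ℕ) :
    (∑ q ∈ Qset n s, ‖MvPowerSeries.coeff (Finsupp.cons p q) M‖) * r ^ (p + s) ≤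
      ∑' e : Fin (n + 2) →₀ ℕ, ‖MvPowerSeries.coeff e M‖ * r ^ (e.sum fun _ v => v) := by
  rw [Finset.sum_mul]
  have hinj : Function.Injective (Finsupp.cons p : (Fin (n + 1) →₀ ℕ) → Fin (n + 2) →₀ ℕ) := by
    intro a b h
    rw [← Finsupp.tail_cons p a, h, Finsupp.tail_cons]
  have heq : ∑ q ∈ Qset n s, ‖MvPowerSeries.coeff (Finsupp.cons p q) M‖ * r ^ (p + s) =
      ∑ e ∈ (Qset n s).map ⟨Finsupp.cons p, hinj⟩,
        ‖MvPowerSeries.coeff e M‖ * r ^ (e.sum fun _ v => v) := by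
    rw [Finset.sum_map]
    refine Finset.sum_congr rfl fun q hq => ?_
    rw [Function.Embedding.coeFn_mk, sum_cons, mem_Qset.1 hq]
  rw [heq]
  exact Summable.sum_le_tsum _ (fun e _ => mul_nonneg (norm_nonneg _) (pow_nonneg hr _)) hsum

lemma geo2 {x : ℝ} (h0 : 0 ≤ x) (h2 : x ≤ 1 / 2) (N : ℕ) :
    ∑ a ∈ Finset.range N, x ^ a ≤ 2 := by
  refine le_trans (Finset.sum_le_sum fun a _ => pow_le_pow_left₀ h0 h2 a) ?_
  rw [geom_sum_eq (by norm_num : (1 / 2 : ℝ) ≠ 1)]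
  have hp : (0 : ℝ) ≤ (1 / 2 : ℝ) ^ N := by positivity
  have : ((1 / 2 : ℝ) ^ N - 1) / (1 / 2 - 1) = 2 - 2 * (1 / 2) ^ N := by ring
  rw [this]
  linarith

lemma sum_boxF2 (t : ℕ) (f : ℕ → ℕ → ℝ) :
    ∑ d ∈ boxF 2 t, f (d 0) (d 1) =
      ∑ a ∈ Finset.range (t + 1), ∑ b ∈ Finset.range (t + 1), f a b := by
  rw [← Finset.sum_product']
  refine Finset.sum_nbij' (i := fun d => (d 0, d 1)) (j := fun p => pairF p.1 p.2)
    ?_ ?_ ?_ ?_ ?_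
  · intro d hd
    have := mem_boxF.1 hd
    simp only [Finset.mem_product, Finset.mem_range]
    exact ⟨by have := this 0; omega, by have := this 1; omega⟩
  · rintro ⟨a, b⟩ hp
    simp only [Finset.mem_product, Finset.mem_range] at hp
    refine mem_boxF.2 fun i => ?_
    refine Fin.cases ?_ (fun i => ?_) i
    · rw [pairF_zero]; omega
    · have : i = 0 := Subsingleton.elim i 0
      subst this
      rw [show ((0 : Fin 1).succ) = 1 from rfl, pairF_one]
      omega
  · intro d _
    exact (eq_pairF d).symm
  · rintro ⟨a, b⟩ _
    rfl
  · intro d _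
    rfl
end MEAux

/-- **Lemma 2**: the majorant equation `σ·δⁿv = z·M̃(z, δⁿv)` has a unique formal power
series solution `ψ` with zero constant term; `ψ` converges near zero, has nonnegative real
coefficients, and is a majorant series for the formal solution `ψ̂` of
`L̄(δ+k)ψ̂ = z·M(z, ψ̂, δψ̂, …, δⁿψ̂)`. -/
theorem majorant_equation_lemma (n : ℕ) (hn : 1 ≤ n)
    (L : Polynomial ℂ) (hdeg : L.degree = (n : ℕ)) (k : ℕ)
    (hLk : ∀ j : ℕ, 1 ≤ j → L.eval ((j + k : ℕ) : ℂ) ≠ 0)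
    (σ : ℝ)
    (hσ : σ = ⨅ j : ℕ, ‖L.eval ((j + 1 + k : ℕ) : ℂ)‖ / ((j + 1 : ℕ) : ℝ) ^ n)
    (M : MvPowerSeries (Fin (n + 2)) ℂ) (hM : ConvNearZero M)
    (ψhat : PowerSeries ℂ) (hψhat0 : PowerSeries.constantCoeff ψhat = 0)
    (hψhat : LpolyOp L k ψhat = PowerSeries.X * substSeries M (phiArgs n ψhat)) :
    0 < σ ∧
    ∃ ψ : PowerSeries ℂ,
      (PowerSeries.constantCoeff ψ = 0 ∧
        (σ : ℂ) • eulerD^[n] ψ =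
          PowerSeries.X * substSeries (majorantSeries n M) ![PowerSeries.X, eulerD^[n] ψ]) ∧
      (∀ ψ' : PowerSeries ℂ, PowerSeries.constantCoeff ψ' = 0 →
        (σ : ℂ) • eulerD^[n] ψ' =
          PowerSeries.X * substSeries (majorantSeries n M) ![PowerSeries.X, eulerD^[n] ψ'] →
        ψ' = ψ) ∧
      PosRadius ψ ∧
      (∀ j : ℕ, 1 ≤ j → ∃ C : ℝ, 0 ≤ C ∧ PowerSeries.coeff j ψ = (C : ℂ) ∧
        ‖PowerSeries.coeff j ψhat‖ ≤ C) := by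
  classical
  have hσpos : 0 < σ := by rw [hσ]; exact MEAux.sigma_pos n hn L hdeg k hLk
  have hσne : σ ≠ 0 := ne_of_gt hσpos
  refine ⟨hσpos, ?_⟩
  set G := majorantSeries n M with hGdef
  have hGre : ∀ d : Fin 2 →₀ ℕ, MvPowerSeries.coeff d G =
      ((∑ q ∈ MEAux.Qset n (d 1), ‖MvPowerSeries.coeff (Finsupp.cons (d 0) q) M‖ : ℝ) : ℂ) :=
    fun d => MEAux.majorantSeries_eq n M d
  have hGnnr : ∀ d, MEAux.NNR (MvPowerSeries.coeff d G) := fun d => by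
    rw [hGre d]
    exact MEAux.NNR.ofReal (Finset.sum_nonneg fun q _ => norm_nonneg _)
  set ψ := MEAux.psiS n σ G with hψdef
  set v := MEAux.vS n σ G with hvdef
  have hveq : eulerD^[n] ψ = v := rfl
  have hψc : ∀ j, PowerSeries.coeff j ψ = MEAux.solC n σ G j := fun j => by
    rw [hψdef]; exact PowerSeries.coeff_mk _ _
  have hψ0 : PowerSeries.constantCoeff ψ = 0 := by
    rw [← PowerSeries.coeff_zero_eq_constantCoeff, hψc 0, MEAux.solC_zero]
  have hv0 : PowerSeries.constantCoeff v = 0 := by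
    rw [hvdef]; exact MEAux.constCoeff_vS n σ G
  have heq2 : (σ : ℂ) • eulerD^[n] ψ =
      PowerSeries.X * substSeries G ![PowerSeries.X, eulerD^[n] ψ] := by
    rw [hveq]; exact MEAux.psiS_eq n σ G hσne
  have hNNRψ : ∀ j, MEAux.NNR (PowerSeries.coeff j ψ) := fun j => by
    rw [hψc j]; exact MEAux.NNR_solC n σ G hσpos hGnnr j
  have hvnns : MEAux.NNS v := fun m => by
    rw [hvdef, MEAux.coeff_vS]
    exact (MEAux.NNR.natPow m n).mul (MEAux.NNR_solC n σ G hσpos hGnnr m)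
  have hcastn : ∀ m : ℕ, ((m : ℂ)) ^ n = (((m : ℝ) ^ n : ℝ) : ℂ) := fun m => by
    push_cast; ring
  -- σ lower bound on the eigenvalues
  have hbddf : BddBelow (Set.range fun i : ℕ =>
      ‖L.eval ((i + 1 + k : ℕ) : ℂ)‖ / ((i + 1 : ℕ) : ℝ) ^ n) := by
    refine ⟨0, ?_⟩
    rintro x ⟨i, rfl⟩
    positivity
  have hσle : ∀ j : ℕ, 1 ≤ j → σ * ((j : ℕ) : ℝ) ^ n ≤ ‖L.eval ((j + k : ℕ) : ℂ)‖ := by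
    intro j hj
    have h1 : σ ≤ ‖L.eval ((j - 1 + 1 + k : ℕ) : ℂ)‖ / ((j - 1 + 1 : ℕ) : ℝ) ^ n := by
      rw [hσ]; exact ciInf_le hbddf (j - 1)
    rw [show j - 1 + 1 = j from by omega] at h1
    have hjpos : (0 : ℝ) < ((j : ℕ) : ℝ) ^ n :=
      pow_pos (by exact_mod_cast Nat.pos_of_ne_zero (by omega)) n
    exact (le_div_iff₀ hjpos).1 h1
  -- constant coefficients of the arguments vanish
  have hargs0 : ∀ i : Fin (n + 2), PowerSeries.constantCoeff (phiArgs n ψhat i) = 0 := by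
    intro i
    show PowerSeries.constantCoeff
      (if (i : ℕ) = 0 then PowerSeries.X else eulerD^[(i : ℕ) - 1] ψhat) = 0
    split
    · simp
    · rw [← PowerSeries.coeff_zero_eq_constantCoeff, MEAux.coeff_eulerD_iter]
      rcases Nat.eq_zero_or_pos ((i : ℕ) - 1) with h | h
      · rw [h, pow_zero, one_mul, PowerSeries.coeff_zero_eq_constantCoeff]
        exact hψhat0
      · rw [Nat.cast_zero, zero_pow (by omega : (i : ℕ) - 1 ≠ 0), zero_mul]
  -- the majorant arguments
  set maj : Fin (n + 2) → PowerSeries ℂ :=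
    fun i => if (i : ℕ) = 0 then PowerSeries.X else v with hmajdef
  have hmajnns : ∀ i, MEAux.NNS (maj i) := fun i => by
    rw [hmajdef]
    dsimp only
    split
    · exact MEAux.NNS.X
    · exact hvnns
  have hphi0 : phiArgs n ψhat 0 = PowerSeries.X := by simp [phiArgs]
  have hmaj0 : maj 0 = PowerSeries.X := by simp [hmajdef]
  have hphis : ∀ i' : Fin (n + 1), phiArgs n ψhat i'.succ = eulerD^[(i' : ℕ)] ψhat := by
    intro i'
    simp [phiArgs, Fin.val_succ]
  have hmajs : ∀ i' : Fin (n + 1), maj i'.succ = v := by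
    intro i'
    simp [hmajdef, Fin.val_succ]
  -- the domination of the coefficients of ψhat
  have hdom : ∀ j, ‖PowerSeries.coeff j ψhat‖ ≤ (PowerSeries.coeff j ψ).re := by
    intro j
    induction j using Nat.strong_induction_on with
    | _ j ih =>
      rcases j with _ | j
      · rw [PowerSeries.coeff_zero_eq_constantCoeff, hψhat0, norm_zero,
          ← PowerSeries.coeff_zero_eq_constantCoeff]
        exact (hNNRψ 0).2
      · have hDom : ∀ i : Fin (n + 2), MEAux.Dom j (phiArgs n ψhat i) (maj i) := by
          intro i
          refine Fin.cases ?_ (fun i' => ?_) i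
          · rw [hphi0, hmaj0]
            intro m hm
            rw [PowerSeries.coeff_X]
            split <;> simp
          · rw [hphis i', hmajs i']
            intro m hm
            rw [MEAux.coeff_eulerD_iter, hvdef, MEAux.coeff_vS, ← hψc m]
            rw [norm_mul, norm_pow, Complex.norm_natCast]
            rw [MEAux.NNR.mul_re (MEAux.NNR.natPow m n).1 (hNNRψ m).1, hcastn m,
              Complex.ofReal_re]
            rcases Nat.eq_zero_or_pos m with hm0 | hm0
            · subst hm0
              rw [PowerSeries.coeff_zero_eq_constantCoeff, hψhat0, norm_zero, mul_zero,
                ← PowerSeries.coeff_zero_eq_constantCoeff]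
              exact mul_nonneg (by positivity) (hNNRψ 0).2
            · calc ((m : ℝ)) ^ ((i' : ℕ)) * ‖PowerSeries.coeff m ψhat‖
                  ≤ ((m : ℝ)) ^ ((i' : ℕ)) * (PowerSeries.coeff m ψ).re :=
                    mul_le_mul_of_nonneg_left (ih m (by omega)) (by positivity)
                _ ≤ ((m : ℝ)) ^ n * (PowerSeries.coeff m ψ).re := by
                    refine mul_le_mul_of_nonneg_right ?_ (hNNRψ m).2
                    refine pow_le_pow_right₀ ?_ ?_
                    · exact_mod_cast Nat.one_le_iff_ne_zero.2 (by omega)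
                    · have := i'.isLt
                      omega
        have hprod : ∀ e : Fin (n + 2) →₀ ℕ,
            ‖PowerSeries.coeff j (∏ i : Fin (n + 2), (phiArgs n ψhat i) ^ (e i))‖ ≤
            (PowerSeries.coeff j (PowerSeries.X ^ (e 0) *
              v ^ (∑ i : Fin (n + 1), e i.succ))).re := by
          intro e
          have h1 := MEAux.Dom.prod Finset.univ (phiArgs n ψhat) maj e j
            (fun i _ => hDom i) (fun i _ => hmajnns i) j le_rfl
          rw [show (∏ i : Fin (n + 2), maj i ^ e i) =
            PowerSeries.X ^ (e 0) * v ^ (∑ i : Fin (n + 1), e i.succ) from by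
              simp only [hmajdef]
              exact MEAux.prod_maj n v e] at h1
          exact h1
        have hcoeff := congrArg (PowerSeries.coeff (j + 1)) hψhat
        rw [MEAux.coeff_LpolyOp, PowerSeries.coeff_succ_X_mul] at hcoeff
        have hs1 : ‖PowerSeries.coeff j (substSeries M (phiArgs n ψhat))‖ ≤
            ∑ e ∈ MEAux.boxF (n + 2) j, ‖MvPowerSeries.coeff e M‖ *
              (PowerSeries.coeff j (PowerSeries.X ^ (e 0) *
                v ^ (∑ i : Fin (n + 1), e i.succ))).re := by
          rw [MEAux.coeff_substSeries M hargs0 j (s := MEAux.boxF (n + 2) j)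
            (fun d hd => MEAux.boxF_mem_of_deg_le hd)]
          refine le_trans (norm_sum_le _ _) (Finset.sum_le_sum fun e _ => ?_)
          rw [norm_mul]
          exact mul_le_mul_of_nonneg_left (hprod e) (norm_nonneg _)
        have hs2 := MEAux.regroup n M v hv0 j
          (fun A t => (PowerSeries.coeff t A).re)
          (fun s e0 hgt => by
            show (PowerSeries.coeff j (PowerSeries.X ^ e0 * v ^ s)).re = 0
            rw [MEAux.coeff_X_pow_mul_pow_eq_zero hv0 (by omega)]
            simp)
        have hs3 : ∑ d ∈ MEAux.boxF 2 j,
            (∑ q ∈ MEAux.Qset n (d 1), ‖MvPowerSeries.coeff (Finsupp.cons (d 0) q) M‖) *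
              (PowerSeries.coeff j (PowerSeries.X ^ (d 0) * v ^ (d 1))).re =
            (PowerSeries.coeff j (substSeries G ![PowerSeries.X, v])).re := by
          rw [MEAux.coeff_substSeries G (MEAux.args2_constCoeff hv0) j (s := MEAux.boxF 2 j)
            (fun d hd => MEAux.boxF_mem_of_deg_le hd), Complex.re_sum]
          refine Finset.sum_congr rfl fun d _ => ?_
          rw [MEAux.prod2, hGre d,
            MEAux.NNR.mul_re (Complex.ofReal_im _)
              (((MEAux.NNS.X.pow (d 0)).mul (hvnns.pow (d 1))) j).1,
            Complex.ofReal_re]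
        have hs4 : (PowerSeries.coeff j (substSeries G ![PowerSeries.X, v])).re =
            σ * ((j + 1 : ℕ) : ℝ) ^ n * (PowerSeries.coeff (j + 1) ψ).re := by
          have h5 := congrArg (PowerSeries.coeff (j + 1)) heq2
          rw [map_smul, smul_eq_mul, PowerSeries.coeff_succ_X_mul, hveq] at h5
          rw [← h5, hvdef, MEAux.coeff_vS,
            MEAux.NNR.mul_re (Complex.ofReal_im σ)
              (((MEAux.NNR.natPow (j + 1) n).mul
                (MEAux.NNR_solC n σ G hσpos hGnnr (j + 1))).1),
            MEAux.NNR.mul_re (MEAux.NNR.natPow (j + 1) n).1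
              (MEAux.NNR_solC n σ G hσpos hGnnr (j + 1)).1,
            Complex.ofReal_re, hcastn (j + 1), Complex.ofReal_re, ← hψc (j + 1)]
          ring
        have hLb := hσle (j + 1) (by omega)
        have hfinal : σ * ((j + 1 : ℕ) : ℝ) ^ n * ‖PowerSeries.coeff (j + 1) ψhat‖ ≤
            σ * ((j + 1 : ℕ) : ℝ) ^ n * (PowerSeries.coeff (j + 1) ψ).re := by
          calc σ * ((j + 1 : ℕ) : ℝ) ^ n * ‖PowerSeries.coeff (j + 1) ψhat‖
              ≤ ‖L.eval ((j + 1 + k : ℕ) : ℂ)‖ * ‖PowerSeries.coeff (j + 1) ψhat‖ :=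
                mul_le_mul_of_nonneg_right hLb (norm_nonneg _)
            _ = ‖PowerSeries.coeff j (substSeries M (phiArgs n ψhat))‖ := by
                rw [← norm_mul, hcoeff]
            _ ≤ ∑ e ∈ MEAux.boxF (n + 2) j, ‖MvPowerSeries.coeff e M‖ *
                (PowerSeries.coeff j (PowerSeries.X ^ (e 0) *
                  v ^ (∑ i : Fin (n + 1), e i.succ))).re := hs1
            _ = ∑ d ∈ MEAux.boxF 2 j,
                (∑ q ∈ MEAux.Qset n (d 1),
                  ‖MvPowerSeries.coeff (Finsupp.cons (d 0) q) M‖) *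
                  (PowerSeries.coeff j (PowerSeries.X ^ (d 0) * v ^ (d 1))).re := hs2
            _ = (PowerSeries.coeff j (substSeries G ![PowerSeries.X, v])).re := hs3
            _ = σ * ((j + 1 : ℕ) : ℝ) ^ n * (PowerSeries.coeff (j + 1) ψ).re := hs4
        exact le_of_mul_le_mul_left hfinal
          (mul_pos hσpos (pow_pos (by exact_mod_cast Nat.succ_pos j) n))
  -- convergence
  obtain ⟨r, hrpos, hMsum⟩ := hM
  have hrne : r ≠ 0 := ne_of_gt hrpos
  set S : ℝ := ∑' e : Fin (n + 2) →₀ ℕ,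
    ‖MvPowerSeries.coeff e M‖ * r ^ (e.sum fun _ v => v) with hSdef
  have hS0 : 0 ≤ S := tsum_nonneg fun e => mul_nonneg (norm_nonneg _) (pow_nonneg hrpos.le _)
  have h4S : (0 : ℝ) < 4 * S + 1 := by linarith
  set A : ℝ := r / 2 with hAdef
  have hApos : 0 < A := by rw [hAdef]; positivity
  set ρ : ℝ := min (r / 2) (σ * (r / 2) / (4 * S + 1)) with hρdef
  have hρpos : 0 < ρ :=
    lt_min (by positivity) (div_pos (mul_pos hσpos (by positivity)) h4S)
  have hρr : ρ ≤ r / 2 := min_le_left _ _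
  have hρS : 4 * S * ρ ≤ σ * A := by
    have h1 : ρ ≤ σ * (r / 2) / (4 * S + 1) := min_le_right _ _
    have h2 : ρ * (4 * S + 1) ≤ σ * (r / 2) := by
      rw [← le_div_iff₀ h4S]
      exact h1
    rw [hAdef]
    nlinarith [hρpos.le, hS0]
  have hGrb : ∀ a b : ℕ,
      (∑ q ∈ MEAux.Qset n b, ‖MvPowerSeries.coeff (Finsupp.cons a q) M‖) * r ^ (a + b)
        ≤ S :=
    fun a b => MEAux.Gre_bound n M r hrpos.le hMsum a b
  have hPb : ∀ t, MEAux.Psum ρ t v ≤ A := by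
    intro t
    induction t with
    | zero =>
        have h9 : MEAux.Psum ρ 0 v = (PowerSeries.coeff 0 v).re := by
          rw [MEAux.Psum]
          simp
        rw [h9, PowerSeries.coeff_zero_eq_constantCoeff, hv0]
        show ((0 : ℂ)).re ≤ A
        rw [Complex.zero_re]
        exact hApos.le
    | succ t iht =>
        have hsub0 : ∀ m : ℕ, σ * (PowerSeries.coeff (m + 1) v).re =
            (PowerSeries.coeff m (substSeries G ![PowerSeries.X, v])).re := by
          intro m
          have h5 := congrArg (PowerSeries.coeff (m + 1)) heq2
          rw [map_smul, smul_eq_mul, PowerSeries.coeff_succ_X_mul, hveq] at h5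
          rw [← h5, MEAux.NNR.mul_re (Complex.ofReal_im σ) (hvnns (m + 1)).1,
            Complex.ofReal_re]
        have key1 : MEAux.Psum ρ (t + 1) v =
            σ⁻¹ * ρ * MEAux.Psum ρ t (substSeries G ![PowerSeries.X, v]) := by
          rw [MEAux.Psum, Finset.sum_range_succ']
          rw [show (PowerSeries.coeff 0 v).re * ρ ^ 0 = 0 from by
            rw [PowerSeries.coeff_zero_eq_constantCoeff, hv0]; simp]
          rw [add_zero, MEAux.Psum, Finset.mul_sum]
          refine Finset.sum_congr rfl fun m _ => ?_
          have h6 := hsub0 m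
          rw [← h6]
          have h7 : σ⁻¹ * ρ * (σ * (PowerSeries.coeff (m + 1) v).re * ρ ^ m) =
              (σ⁻¹ * σ) * ((PowerSeries.coeff (m + 1) v).re * (ρ * ρ ^ m)) := by ring
          rw [h7, inv_mul_cancel₀ hσne, one_mul, pow_succ]
          ring
        have hexp : ∀ m ∈ Finset.range (t + 1),
            (PowerSeries.coeff m (substSeries G ![PowerSeries.X, v])).re * ρ ^ m =
            ∑ d ∈ MEAux.boxF 2 t,
              (∑ q ∈ MEAux.Qset n (d 1), ‖MvPowerSeries.coeff (Finsupp.cons (d 0) q) M‖) *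
                ((PowerSeries.coeff m (PowerSeries.X ^ (d 0) * v ^ (d 1))).re * ρ ^ m) := by
          intro m hm
          rw [Finset.mem_range] at hm
          rw [MEAux.coeff_substSeries G (MEAux.args2_constCoeff hv0) m
            (s := MEAux.boxF 2 t)
            (fun d hd => MEAux.boxF_mem_of_deg_le (le_trans hd (by omega))),
            Complex.re_sum, Finset.sum_mul]
          refine Finset.sum_congr rfl fun d _ => ?_
          rw [MEAux.prod2, hGre d,
            MEAux.NNR.mul_re (Complex.ofReal_im _)
              (((MEAux.NNS.X.pow (d 0)).mul (hvnns.pow (d 1))) m).1,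
            Complex.ofReal_re]
          ring
        have key2 : MEAux.Psum ρ t (substSeries G ![PowerSeries.X, v]) ≤
            ∑ d ∈ MEAux.boxF 2 t,
              (∑ q ∈ MEAux.Qset n (d 1), ‖MvPowerSeries.coeff (Finsupp.cons (d 0) q) M‖) *
                (ρ ^ (d 0) * A ^ (d 1)) := by
          rw [MEAux.Psum, Finset.sum_congr rfl hexp, Finset.sum_comm]
          refine Finset.sum_le_sum fun d _ => ?_
          rw [← Finset.mul_sum]
          refine mul_le_mul_of_nonneg_left ?_
            (Finset.sum_nonneg fun q _ => norm_nonneg _)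
          have hP1 : (∑ m ∈ Finset.range (t + 1),
              (PowerSeries.coeff m (PowerSeries.X ^ (d 0) * v ^ (d 1))).re * ρ ^ m) =
              MEAux.Psum ρ t (PowerSeries.X ^ (d 0) * v ^ (d 1)) := rfl
          rw [hP1]
          calc MEAux.Psum ρ t (PowerSeries.X ^ (d 0) * v ^ (d 1))
              ≤ MEAux.Psum ρ t (PowerSeries.X ^ (d 0)) * MEAux.Psum ρ t (v ^ (d 1)) :=
                MEAux.Psum_mul_le hρpos.le (MEAux.NNS.X.pow _) (hvnns.pow _)
            _ ≤ ρ ^ (d 0) * A ^ (d 1) := by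
                refine mul_le_mul ?_ ?_
                  (MEAux.Psum_nonneg hρpos.le (hvnns.pow _)) (by positivity)
                · exact le_trans (MEAux.Psum_pow_le hρpos.le MEAux.NNS.X (d 0))
                    (pow_le_pow_left₀ (MEAux.Psum_nonneg hρpos.le MEAux.NNS.X)
                      (MEAux.Psum_X_le hρpos.le t) _)
                · exact le_trans (MEAux.Psum_pow_le hρpos.le hvnns (d 1))
                    (pow_le_pow_left₀ (MEAux.Psum_nonneg hρpos.le hvnns) iht _)
        have key3 : ∑ d ∈ MEAux.boxF 2 t,
            (∑ q ∈ MEAux.Qset n (d 1), ‖MvPowerSeries.coeff (Finsupp.cons (d 0) q) M‖) *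
              (ρ ^ (d 0) * A ^ (d 1)) ≤ 4 * S := by
          have hterm : ∀ d ∈ MEAux.boxF 2 t,
              (∑ q ∈ MEAux.Qset n (d 1), ‖MvPowerSeries.coeff (Finsupp.cons (d 0) q) M‖) *
                (ρ ^ (d 0) * A ^ (d 1)) ≤ S * ((ρ / r) ^ (d 0) * (A / r) ^ (d 1)) := by
            intro d _
            have h6 := hGrb (d 0) (d 1)
            have h9 : ∀ (x : ℝ) (c : ℕ), (x / r) ^ c * r ^ c = x ^ c := fun x c => by
              rw [div_pow]
              exact div_mul_cancel₀ _ (pow_ne_zero c hrne)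
            calc (∑ q ∈ MEAux.Qset n (d 1),
                ‖MvPowerSeries.coeff (Finsupp.cons (d 0) q) M‖) *
                  (ρ ^ (d 0) * A ^ (d 1))
                = ((∑ q ∈ MEAux.Qset n (d 1),
                    ‖MvPowerSeries.coeff (Finsupp.cons (d 0) q) M‖) * r ^ ((d 0) + (d 1))) *
                    ((ρ / r) ^ (d 0) * (A / r) ^ (d 1)) := by
                  rw [pow_add, ← h9 ρ (d 0), ← h9 A (d 1)]
                  ring
              _ ≤ S * ((ρ / r) ^ (d 0) * (A / r) ^ (d 1)) :=
                  mul_le_mul_of_nonneg_right h6 (by positivity)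
          refine le_trans (Finset.sum_le_sum hterm) ?_
          rw [← Finset.mul_sum]
          rw [MEAux.sum_boxF2 t (fun a b => (ρ / r) ^ a * (A / r) ^ b)]
          have hgeo1 : ∑ a ∈ Finset.range (t + 1), (ρ / r) ^ a ≤ 2 := by
            refine MEAux.geo2 (by positivity) ?_ _
            rw [div_le_div_iff₀ hrpos (by norm_num)]
            linarith
          have hgeo2 : ∑ b ∈ Finset.range (t + 1), (A / r) ^ b ≤ 2 := by
            refine MEAux.geo2 (by positivity) ?_ _
            rw [hAdef, div_le_div_iff₀ hrpos (by norm_num)]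
            linarith
          have hsum2 : ∑ a ∈ Finset.range (t + 1), ∑ b ∈ Finset.range (t + 1),
              (ρ / r) ^ a * (A / r) ^ b =
              (∑ a ∈ Finset.range (t + 1), (ρ / r) ^ a) *
                (∑ b ∈ Finset.range (t + 1), (A / r) ^ b) := by
            rw [Finset.sum_mul_sum]
          rw [hsum2]
          calc S * ((∑ a ∈ Finset.range (t + 1), (ρ / r) ^ a) *
                (∑ b ∈ Finset.range (t + 1), (A / r) ^ b))
              ≤ S * (2 * 2) := by
                refine mul_le_mul_of_nonneg_left ?_ hS0
                refine mul_le_mul hgeo1 hgeo2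
                  (Finset.sum_nonneg fun b _ => by positivity) (by norm_num)
            _ = 4 * S := by ring
        calc MEAux.Psum ρ (t + 1) v
            = σ⁻¹ * ρ * MEAux.Psum ρ t (substSeries G ![PowerSeries.X, v]) := key1
          _ ≤ σ⁻¹ * ρ * (4 * S) := by
              refine mul_le_mul_of_nonneg_left (le_trans key2 key3) ?_
              positivity
          _ ≤ A := by
              have h8 : σ⁻¹ * ρ * (4 * S) = σ⁻¹ * (4 * S * ρ) := by ring
              rw [h8]
              calc σ⁻¹ * (4 * S * ρ) ≤ σ⁻¹ * (σ * A) :=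
                    mul_le_mul_of_nonneg_left hρS (by positivity)
                _ = A := by field_simp
  have hg : Summable fun m : ℕ => (PowerSeries.coeff m v).re * ρ ^ m := by
    refine summable_of_sum_range_le (c := A)
      (fun m => mul_nonneg (hvnns m).2 (pow_nonneg hρpos.le m)) fun t => ?_
    refine le_trans ?_ (hPb t)
    rw [MEAux.Psum]
    exact Finset.sum_le_sum_of_subset_of_nonneg (Finset.range_subset_range.2 (by omega))
      fun m _ _ => mul_nonneg (hvnns m).2 (pow_nonneg hρpos.le m)
  have hsummable : Summable fun m : ℕ => ‖PowerSeries.coeff m ψ‖ * ρ ^ m := by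
    refine hg.of_nonneg_of_le
      (fun m => mul_nonneg (norm_nonneg _) (pow_nonneg hρpos.le m)) (fun m => ?_)
    rw [(hNNRψ m).norm_eq]
    refine mul_le_mul_of_nonneg_right ?_ (pow_nonneg hρpos.le m)
    have hcv : (PowerSeries.coeff m v).re = ((m : ℝ)) ^ n * (PowerSeries.coeff m ψ).re := by
      rw [hvdef, MEAux.coeff_vS, ← hψc m,
        MEAux.NNR.mul_re (MEAux.NNR.natPow m n).1 (hNNRψ m).1, hcastn m, Complex.ofReal_re]
    rw [hcv]
    rcases Nat.eq_zero_or_pos m with hm | hm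
    · subst hm
      rw [PowerSeries.coeff_zero_eq_constantCoeff, hψ0]
      simp
    · have h1m : (1 : ℝ) ≤ ((m : ℝ)) ^ n := by
        calc (1 : ℝ) = 1 ^ n := (one_pow n).symm
          _ ≤ ((m : ℝ)) ^ n := pow_le_pow_left₀ (by norm_num) (by exact_mod_cast hm) n
      nlinarith [(hNNRψ m).2]
  refine ⟨ψ, ⟨hψ0, heq2⟩, ?_, ⟨ρ, hρpos, hsummable⟩, ?_⟩
  · intro ψ' h0' heq'
    exact MEAux.psiS_unique n σ G hσne ψ' h0' heq'
  · intro j hj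
    exact ⟨(PowerSeries.coeff j ψ).re, (hNNRψ j).2, (hNNRψ j).eq_ofReal, hdom j⟩
end

section
/- Let σ, ρ, μ, r be positive real numbers and n ≥ 0 an integer, and define f(z,w) = σ·w·(1 − w/ρ)^{n+1} − μz/(1 − z/r) for z ≠ r. Then the pair (z₀, w₀) with w₀ = ρ/(n+2) and z₀ = r·ρ/(ρ + μr/(σN)), where N = (n+1)^{n+1}/(n+2)^{n+2}, satisfies f(z₀, w₀) = 0 and ∂f/∂w(z₀, w₀) = 0; moreover, it is the unique pair (z, w) ∈ ℂ² with z ≠ r and w ≠ ρ satisfying both equations. -/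
/-- The system `f(z,w) = 0`, `∂f/∂w(z,w) = 0` for
`f(z,w) = σw(1−w/ρ)^{n+1} − μz/(1−z/r)` has the unique solution
`w₀ = ρ/(n+2)`, `z₀ = rρ/(ρ + μr/(σN))`, `N = (n+1)^{n+1}/(n+2)^{n+2}`,
among pairs `(z,w) ∈ ℂ²` with `z ≠ r`, `w ≠ ρ`. -/
theorem branch_point_system (σ ρ μ r : ℝ) (hσ : 0 < σ) (hρ : 0 < ρ) (hμ : 0 < μ)
    (hr : 0 < r) (n : ℕ)
    (f fw : ℂ → ℂ → ℂ)
    (hf : ∀ z w : ℂ, f z w = σ * w * (1 - w / ρ) ^ (n + 1) - μ * z / (1 - z / r))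
    (hfw : ∀ z w : ℂ, fw z w = σ * (1 - w / ρ) ^ n * (1 - (n + 2) * w / ρ))
    (N z₀ w₀ : ℝ)
    (hN : N = (n + 1 : ℝ) ^ (n + 1) / (n + 2 : ℝ) ^ (n + 2))
    (hz₀ : z₀ = r * ρ / (ρ + μ * r / (σ * N)))
    (hw₀ : w₀ = ρ / (n + 2)) :
    (f (z₀ : ℂ) (w₀ : ℂ) = 0 ∧ fw (z₀ : ℂ) (w₀ : ℂ) = 0) ∧
    ∀ z w : ℂ, z ≠ (r : ℂ) → w ≠ (ρ : ℂ) → f z w = 0 → fw z w = 0 →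
      z = (z₀ : ℂ) ∧ w = (w₀ : ℂ) := by
  have hNpos : 0 < N := by rw [hN]; positivity
  have hD : 0 < ρ + μ * r / (σ * N) := by positivity
  have hz₀lt : z₀ < r := by
    rw [hz₀, div_lt_iff₀ hD]
    have h1 : 0 < μ * r / (σ * N) := by positivity
    nlinarith
  have hσc : (σ : ℂ) ≠ 0 := by exact_mod_cast hσ.ne'
  have hρc : (ρ : ℂ) ≠ 0 := by exact_mod_cast hρ.ne'
  have hrc : (r : ℂ) ≠ 0 := by exact_mod_cast hr.ne'
  have hμc : (μ : ℂ) ≠ 0 := by exact_mod_cast hμ.ne'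
  have hNc : (N : ℂ) ≠ 0 := by exact_mod_cast hNpos.ne'
  have hn2R : ((n : ℝ) + 2) ≠ 0 := by positivity
  have hn2c : ((n : ℂ) + 2) ≠ 0 := by exact_mod_cast hn2R
  have hn1c : ((n : ℂ) + 1) ≠ 0 := by
    have : ((n : ℝ) + 1) ≠ 0 := by positivity
    exact_mod_cast this
  have hw₀c : (w₀ : ℂ) = (ρ : ℂ) / ((n : ℂ) + 2) := by rw [hw₀]; push_cast; ring
  have hNc_eq : (N : ℂ) = ((n : ℂ) + 1) ^ (n + 1) / ((n : ℂ) + 2) ^ (n + 2) := by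
    rw [hN]; push_cast; ring
  have hz₀c : (z₀ : ℂ) = (r : ℂ) * ρ / ((ρ : ℂ) + μ * r / (σ * N)) := by
    rw [hz₀]; push_cast; ring
  -- term 1 : σ w₀ (1 - w₀/ρ)^{n+1} = σ ρ N
  have hterm1 : (σ : ℂ) * w₀ * (1 - (w₀ : ℂ) / ρ) ^ (n + 1) = (σ : ℂ) * ρ * N := by
    rw [hw₀c, hNc_eq]
    have hA : (1 : ℂ) - (ρ : ℂ) / ((n : ℂ) + 2) / ρ = ((n : ℂ) + 1) / ((n : ℂ) + 2) := by
      field_simp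
      ring
    rw [hA, div_pow]
    field_simp
    ring
  -- term 2 : μ z₀ = σ ρ N (1 - z₀/r)
  have hDc : ((ρ : ℂ) + (μ : ℂ) * r / (σ * N)) ≠ 0 := by
    have := hD.ne'
    push_cast at *
    exact_mod_cast this
  have hE : (ρ : ℂ) * σ * N + μ * r ≠ 0 := by
    have h1 : (0 : ℝ) < ρ * σ * N + μ * r := by positivity
    have h2 := h1.ne'
    push_cast at *
    exact_mod_cast h2
  have h2 : (z₀ : ℂ) = (r : ℂ) * ρ * σ * N / ((ρ : ℂ) * σ * N + μ * r) := by
    rw [hz₀c, div_eq_div_iff hDc hE]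
    field_simp
  have hz₀mul : (z₀ : ℂ) * ((ρ : ℂ) * σ * N + μ * r) = (r : ℂ) * ρ * σ * N := by
    rw [h2, div_mul_cancel₀ _ hE]
  have hterm2 : (μ : ℂ) * z₀ = (σ : ℂ) * ρ * N * (1 - (z₀ : ℂ) / r) := by
    have h3 : (1 : ℂ) - (z₀ : ℂ) / r = ((r : ℂ) - z₀) / r := by
      field_simp
    rw [h3, ← mul_div_assoc, eq_div_iff hrc]
    linear_combination hz₀mul
  have h1z₀ : (1 : ℂ) - (z₀ : ℂ) / r ≠ 0 := by
    intro h
    have h2 : (z₀ : ℂ) = r := by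
      field_simp at h
      linear_combination -h
    have : z₀ = r := by exact_mod_cast h2
    exact hz₀lt.ne this
  constructor
  · constructor
    · rw [hf]
      rw [sub_eq_zero, hterm1, eq_div_iff h1z₀]
      linear_combination -hterm2
    · rw [hfw, hw₀c]
      have hlast : (1 : ℂ) - ((n : ℂ) + 2) * ((ρ : ℂ) / ((n : ℂ) + 2)) / ρ = 0 := by
        field_simp
        ring
      rw [hlast, mul_zero]
  · intro z w hzr hwρ h0 hfw0
    rw [hfw] at hfw0
    rcases mul_eq_zero.mp hfw0 with h | h
    · rcases mul_eq_zero.mp h with h' | h'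
      · exact absurd h' hσc
      · have hsub : (1 : ℂ) - w / ρ = 0 := by
          rcases Nat.eq_zero_or_pos n with h0n | h0n
          · rw [h0n] at h'; simp at h'
          · exact pow_eq_zero_iff h0n.ne' |>.mp h'
        have : w = (ρ : ℂ) := by
          field_simp at hsub
          linear_combination -hsub
        exact absurd this hwρ
    · have hww : w = (w₀ : ℂ) := by
        rw [hw₀c]
        field_simp at h ⊢
        linear_combination -h
      have h1z : (1 : ℂ) - z / r ≠ 0 := by
        intro hzz
        apply hzr
        field_simp at hzz
        linear_combination -hzz
      rw [hf, hww, hterm1] at h0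
      rw [sub_eq_zero, eq_div_iff h1z] at h0
      -- h0 : σ ρ N * (1 - z/r) = μ z
      have hcoef : ((μ : ℂ) + (σ : ℂ) * ρ * N / r) ≠ 0 := by
        have : (0 : ℝ) < μ + σ * ρ * N / r := by positivity
        have h2 := this.ne'
        push_cast at *
        exact_mod_cast h2
      have hzz0 : (z - (z₀ : ℂ)) * ((μ : ℂ) + (σ : ℂ) * ρ * N / r) = 0 := by
        linear_combination -h0 - hterm2
      rcases mul_eq_zero.mp hzz0 with hz | hz
      · exact ⟨sub_eq_zero.mp hz, hww⟩
      · exact absurd hz hcoef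
end

section
/- Let σ, ρ, μ, r be positive real numbers, n ≥ 0 an integer, N = (n+1)^{n+1}/(n+2)^{n+2}, and z₀ = r·ρ/(ρ + μr/(σN)) (note z₀ < r). Then there exists a holomorphic function w on the open disk { z ∈ ℂ : |z| < z₀ } with w(0) = 0 such that σ·w(z)·(1 − w(z)/ρ)^{n+1} = μz/(1 − z/r) for all |z| < z₀. -/
open Filter Metric Finset Topology

noncomputable def Complex.abs : AbsoluteValue ℂ ℝ := NormedField.toAbsoluteValue ℂ

theorem Complex.norm_eq_abs (z : ℂ) : ‖z‖ = Complex.abs z := rfl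

theorem Complex.abs_ofReal (x : ℝ) : Complex.abs (x : ℂ) = |x| := by
  rw [← Complex.norm_eq_abs, Complex.norm_real, Real.norm_eq_abs]

theorem Complex.continuous_abs : Continuous Complex.abs := continuous_norm

/-- The fixed-point iteration whose limit is the holomorphic branch. -/
noncomputable def branchIter (σ ρ μ r : ℝ) (n : ℕ) : ℕ → ℂ → ℂ
  | 0 => fun _ => 0
  | (m+1) => fun z =>
      (μ : ℂ) * z / (1 - z / (r : ℂ)) / (σ : ℂ) *
        ((1 - branchIter σ ρ μ r n m z / (ρ : ℂ)) ^ (n + 1))⁻¹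

/-- The limit of the iteration: the holomorphic branch. -/
noncomputable def branchLimit (σ ρ μ r : ℝ) (n : ℕ) (z : ℂ) : ℂ :=
  limUnder Filter.atTop (fun m => branchIter σ ρ μ r n m z)


open Finset in
private lemma branch_diff_bound (ρ : ℝ) (hρ : 0 < ρ) (n : ℕ) (a b : ℂ)
    (hxl : ((n:ℝ)+1)/((n:ℝ)+2) ≤ Complex.abs (1 - a / (ρ:ℂ)))
    (hyl : ((n:ℝ)+1)/((n:ℝ)+2) ≤ Complex.abs (1 - b / (ρ:ℂ))) :
    Complex.abs ((((1 - a/(ρ:ℂ))^(n+1))⁻¹ - ((1 - b/(ρ:ℂ))^(n+1))⁻¹)) ≤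
      ((n:ℝ)+1) * (((n:ℝ)+2)/((n:ℝ)+1))^(n+2) * (Complex.abs (a - b) / ρ) := by
  set x : ℂ := 1 - a/(ρ:ℂ) with hxdef
  set y : ℂ := 1 - b/(ρ:ℂ) with hydef
  have hq : (0:ℝ) < ((n:ℝ)+1)/((n:ℝ)+2) := by positivity
  have hxa : 0 < Complex.abs x := lt_of_lt_of_le hq hxl
  have hya : 0 < Complex.abs y := lt_of_lt_of_le hq hyl
  have hx0 : x ≠ 0 := fun h => by rw [h] at hxa; simp at hxa
  have hy0 : y ≠ 0 := fun h => by rw [h] at hya; simp at hya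
  have hxi : Complex.abs x⁻¹ ≤ ((n:ℝ)+2)/((n:ℝ)+1) := by
    rw [map_inv₀, inv_le_comm₀ hxa (by positivity), inv_div]
    exact hxl
  have hyi : Complex.abs y⁻¹ ≤ ((n:ℝ)+2)/((n:ℝ)+1) := by
    rw [map_inv₀, inv_le_comm₀ hya (by positivity), inv_div]
    exact hyl
  have h1 : x⁻¹^(n+1) - y⁻¹^(n+1)
      = (∑ i ∈ range (n+1), (x⁻¹)^i * (y⁻¹)^(n - i)) * (x⁻¹ - y⁻¹) := by
    have h := geom_sum₂_mul x⁻¹ y⁻¹ (n+1)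
    simp only [Nat.add_sub_cancel] at h
    exact h.symm
  have hyx : y - x = (a - b)/(ρ:ℂ) := by rw [hxdef, hydef]; ring
  have h2 : x⁻¹ - y⁻¹ = (a - b)/(ρ:ℂ) * (x⁻¹ * y⁻¹) := by
    rw [inv_sub_inv hx0 hy0, hyx, div_eq_mul_inv ((a-b)/(ρ:ℂ)) (x*y), mul_inv]
  have key : (x^(n+1))⁻¹ - (y^(n+1))⁻¹
      = (∑ i ∈ range (n+1), (x⁻¹)^i * (y⁻¹)^(n - i)) * ((a - b)/(ρ:ℂ) * (x⁻¹ * y⁻¹)) := by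
    rw [← inv_pow, ← inv_pow, h1, h2]
  rw [key, map_mul, map_mul, map_div₀, Complex.abs_ofReal, abs_of_pos hρ, map_mul]
  have hsum : Complex.abs (∑ i ∈ range (n+1), (x⁻¹)^i * (y⁻¹)^(n - i))
      ≤ ((n:ℝ)+1) * (((n:ℝ)+2)/((n:ℝ)+1))^n := by
    calc Complex.abs (∑ i ∈ range (n+1), (x⁻¹)^i * (y⁻¹)^(n - i))
        ≤ ∑ i ∈ range (n+1), Complex.abs ((x⁻¹)^i * (y⁻¹)^(n - i)) :=
          Complex.abs.sum_le _ _
      _ ≤ ∑ i ∈ range (n+1), (((n:ℝ)+2)/((n:ℝ)+1))^n := by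
          apply Finset.sum_le_sum
          intro i hi
          rw [map_mul, map_pow, map_pow]
          have hin : i ≤ n := Nat.lt_succ_iff.mp (mem_range.mp hi)
          calc Complex.abs x⁻¹ ^ i * Complex.abs y⁻¹ ^ (n - i)
              ≤ (((n:ℝ)+2)/((n:ℝ)+1))^i * (((n:ℝ)+2)/((n:ℝ)+1))^(n-i) := by
                gcongr
            _ = (((n:ℝ)+2)/((n:ℝ)+1))^n := by
                rw [← pow_add, Nat.add_sub_cancel' hin]
      _ = ((n:ℝ)+1) * (((n:ℝ)+2)/((n:ℝ)+1))^n := by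
          rw [Finset.sum_const, card_range, nsmul_eq_mul]
          push_cast; ring
  calc Complex.abs (∑ i ∈ range (n+1), (x⁻¹)^i * (y⁻¹)^(n - i)) *
        (Complex.abs (a-b) / ρ * (Complex.abs x⁻¹ * Complex.abs y⁻¹))
      ≤ (((n:ℝ)+1) * (((n:ℝ)+2)/((n:ℝ)+1))^n) *
        (Complex.abs (a-b) / ρ * ((((n:ℝ)+2)/((n:ℝ)+1)) * (((n:ℝ)+2)/((n:ℝ)+1)))) := by
        apply mul_le_mul hsum _ (by positivity) (by positivity)
        apply mul_le_mul_of_nonneg_left _ (by positivity)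
        exact mul_le_mul hxi hyi (Complex.abs.nonneg _) (by positivity)
    _ = ((n:ℝ)+1) * (((n:ℝ)+2)/((n:ℝ)+1))^(n+2) * (Complex.abs (a-b) / ρ) := by
        rw [pow_succ, pow_succ]; ring

set_option maxHeartbeats 1600000 in
/-- There is a holomorphic branch, vanishing at `z = 0`, of the solution of the algebraic
equation `σw(1−w/ρ)^{n+1} = μz/(1−z/r)` on the disk `|z| < z₀`, where
`z₀ = rρ/(ρ + μr/(σN)) < r` and `N = (n+1)^{n+1}/(n+2)^{n+2}`. -/
theorem holomorphic_branch_exists (σ ρ μ r : ℝ) (hσ : 0 < σ) (hρ : 0 < ρ) (hμ : 0 < μ)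
    (hr : 0 < r) (n : ℕ) (N z₀ : ℝ)
    (hN : N = (n + 1 : ℝ) ^ (n + 1) / (n + 2 : ℝ) ^ (n + 2))
    (hz₀ : z₀ = r * ρ / (ρ + μ * r / (σ * N))) :
    z₀ < r ∧
    ∃ w : ℂ → ℂ, DifferentiableOn ℂ w (Metric.ball (0 : ℂ) z₀) ∧ w 0 = 0 ∧
      ∀ z ∈ Metric.ball (0 : ℂ) z₀,
        σ * w z * (1 - w z / ρ) ^ (n + 1) = μ * z / (1 - z / r) := by
  have hn1 : (0:ℝ) < (n:ℝ)+1 := by positivity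
  have hn2 : (0:ℝ) < (n:ℝ)+2 := by positivity
  have hN0 : 0 < N := by rw [hN]; positivity
  have hM0 : 0 < σ*ρ*N := by positivity
  -- identities
  have id1 : N * (((n:ℝ)+2)/((n:ℝ)+1))^(n+1) = 1/((n:ℝ)+2) := by
    rw [hN, div_pow, pow_succ ((n:ℝ)+2) (n+1)]
    field_simp
  have id2 : N * ((n:ℝ)+1) * (((n:ℝ)+2)/((n:ℝ)+1))^(n+2) = 1 := by
    rw [hN, div_pow]
    field_simp
    ring
  -- z₀ facts
  have hz₀' : z₀ = r * (σ*ρ*N) / (σ*ρ*N + μ*r) := by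
    have h1 : ρ + μ * r / (σ * N) ≠ 0 := by positivity
    rw [hz₀]; field_simp
  have hz₀pos : 0 < z₀ := by rw [hz₀']; positivity
  have hz₀r : z₀ < r := by
    rw [hz₀', div_lt_iff₀ (by positivity)]
    nlinarith [mul_pos hμ hr]
  -- lower bound on |1 - v/ρ|
  have habs1 : ∀ v : ℂ, Complex.abs v ≤ ρ / ((n:ℝ)+2) →
      ((n:ℝ)+1)/((n:ℝ)+2) ≤ Complex.abs (1 - v / (ρ:ℂ)) := by
    intro v hv
    rw [le_div_iff₀ hn2] at hv
    have h1 : Complex.abs (v / (ρ:ℂ)) ≤ 1/((n:ℝ)+2) := by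
      rw [map_div₀, Complex.abs_ofReal, abs_of_pos hρ, div_le_div_iff₀ hρ hn2]
      linarith
    have h2 := norm_sub_norm_le (1:ℂ) (v/(ρ:ℂ))
    simp only [Complex.norm_eq_abs, map_one] at h2
    have h3 : ((n:ℝ)+1)/((n:ℝ)+2) = 1 - 1/((n:ℝ)+2) := by field_simp; ring
    linarith
  have hqpos : (0:ℝ) < ((n:ℝ)+1)/((n:ℝ)+2) := by positivity
  have hne : ∀ v : ℂ, Complex.abs v ≤ ρ / ((n:ℝ)+2) → (1 - v/(ρ:ℂ)) ≠ 0 := by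
    intro v hv h
    have := habs1 v hv
    rw [h] at this; simp at this; linarith
  have habs2 : ∀ v : ℂ, Complex.abs v ≤ ρ / ((n:ℝ)+2) →
      Complex.abs (((1 - v/(ρ:ℂ)) ^ (n+1))⁻¹) ≤ (((n:ℝ)+2)/((n:ℝ)+1))^(n+1) := by
    intro v hv
    have hlb := habs1 v hv
    have habs : 0 < Complex.abs (1 - v/(ρ:ℂ)) := lt_of_lt_of_le hqpos hlb
    rw [map_inv₀, map_pow, inv_le_comm₀ (pow_pos habs _) (by positivity)]
    calc ((((n:ℝ)+2)/((n:ℝ)+1))^(n+1))⁻¹ = (((n:ℝ)+1)/((n:ℝ)+2))^(n+1) := by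
          rw [← inv_pow, inv_div]
      _ ≤ (Complex.abs (1 - v/(ρ:ℂ)))^(n+1) := by gcongr
  -- numerator abs
  have hCabs : ∀ z : ℂ, Complex.abs ((μ:ℂ) * z / (1 - z/(r:ℂ)) / (σ:ℂ))
      = Complex.abs ((μ:ℂ) * z / (1 - z/(r:ℂ))) / σ := by
    intro z
    rw [map_div₀, Complex.abs_ofReal, abs_of_pos hσ]
  have hqbd : ∀ q : ℝ, q ≤ 1 → q*ρ/((n:ℝ)+2) ≤ ρ/((n:ℝ)+2) := by
    intro q hq1
    rw [div_le_div_iff₀ hn2 hn2]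
    nlinarith [mul_nonneg (mul_nonneg (sub_nonneg.mpr hq1) hρ.le) hn2.le]
  -- Bound A: uniform bound on iterates
  have hA : ∀ (z : ℂ) (q : ℝ), 0 ≤ q → q ≤ 1 →
      Complex.abs ((μ:ℂ)*z/(1 - z/(r:ℂ))) ≤ q*(σ*ρ*N) →
      ∀ m, Complex.abs (branchIter σ ρ μ r n m z) ≤ q*ρ/((n:ℝ)+2) := by
    intro z q hq0 hq1 hXq m
    induction m with
    | zero =>
      simp only [branchIter, map_zero]
      positivity
    | succ m ih =>
      have hb : Complex.abs (branchIter σ ρ μ r n m z) ≤ ρ/((n:ℝ)+2) := by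
        refine le_trans ih ?_
        rw [div_le_div_iff₀ hn2 hn2]
        nlinarith [mul_nonneg (mul_nonneg (sub_nonneg.mpr hq1) hρ.le) hn2.le]
      show Complex.abs ((μ:ℂ) * z / (1 - z/(r:ℂ)) / (σ:ℂ) *
          ((1 - branchIter σ ρ μ r n m z / (ρ:ℂ)) ^ (n + 1))⁻¹) ≤ q*ρ/((n:ℝ)+2)
      rw [map_mul, hCabs]
      calc Complex.abs ((μ:ℂ)*z/(1 - z/(r:ℂ))) / σ *
            Complex.abs (((1 - branchIter σ ρ μ r n m z/(ρ:ℂ)) ^ (n+1))⁻¹)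
          ≤ (q*(σ*ρ*N)/σ) * (((n:ℝ)+2)/((n:ℝ)+1))^(n+1) := by
            apply mul_le_mul _ (habs2 _ hb) (Complex.abs.nonneg _) (by positivity)
            gcongr
        _ = q*ρ*(N * (((n:ℝ)+2)/((n:ℝ)+1))^(n+1)) := by
            have hσ' : σ ≠ 0 := hσ.ne'
            generalize (((n:ℝ)+2)/((n:ℝ)+1))^(n+1) = u
            field_simp
        _ = q*ρ/((n:ℝ)+2) := by rw [id1]; ring
  -- Bound B: contraction
  have hB : ∀ (z : ℂ) (q : ℝ), 0 ≤ q → q ≤ 1 →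
      Complex.abs ((μ:ℂ)*z/(1 - z/(r:ℂ))) ≤ q*(σ*ρ*N) →
      ∀ m, Complex.abs (branchIter σ ρ μ r n (m+2) z - branchIter σ ρ μ r n (m+1) z)
        ≤ q * Complex.abs (branchIter σ ρ μ r n (m+1) z - branchIter σ ρ μ r n m z) := by
    intro z q hq0 hq1 hXq m
    have hb1 : Complex.abs (branchIter σ ρ μ r n m z) ≤ ρ/((n:ℝ)+2) := by
      refine le_trans (hA z q hq0 hq1 hXq m) ?_
      rw [div_le_div_iff₀ hn2 hn2]
      nlinarith [mul_nonneg (mul_nonneg (sub_nonneg.mpr hq1) hρ.le) hn2.le]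
    have hb2 : Complex.abs (branchIter σ ρ μ r n (m+1) z) ≤ ρ/((n:ℝ)+2) := by
      refine le_trans (hA z q hq0 hq1 hXq (m+1)) ?_
      rw [div_le_div_iff₀ hn2 hn2]
      nlinarith [mul_nonneg (mul_nonneg (sub_nonneg.mpr hq1) hρ.le) hn2.le]
    have hd := branch_diff_bound ρ hρ n (branchIter σ ρ μ r n (m+1) z)
      (branchIter σ ρ μ r n m z) (habs1 _ hb2) (habs1 _ hb1)
    have hdiff : branchIter σ ρ μ r n (m+2) z - branchIter σ ρ μ r n (m+1) z
        = (μ:ℂ) * z / (1 - z/(r:ℂ)) / (σ:ℂ) *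
          (((1 - branchIter σ ρ μ r n (m+1) z/(ρ:ℂ))^(n+1))⁻¹ -
           ((1 - branchIter σ ρ μ r n m z/(ρ:ℂ))^(n+1))⁻¹) := by
      show (μ:ℂ) * z / (1 - z/(r:ℂ)) / (σ:ℂ) *
            ((1 - branchIter σ ρ μ r n (m+1) z/(ρ:ℂ))^(n+1))⁻¹ -
           (μ:ℂ) * z / (1 - z/(r:ℂ)) / (σ:ℂ) *
            ((1 - branchIter σ ρ μ r n m z/(ρ:ℂ))^(n+1))⁻¹ = _
      ring
    rw [hdiff, map_mul, hCabs]
    calc Complex.abs ((μ:ℂ)*z/(1 - z/(r:ℂ))) / σ *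
          Complex.abs (((1 - branchIter σ ρ μ r n (m+1) z/(ρ:ℂ))^(n+1))⁻¹ -
            ((1 - branchIter σ ρ μ r n m z/(ρ:ℂ))^(n+1))⁻¹)
        ≤ (q*(σ*ρ*N)/σ) * (((n:ℝ)+1) * (((n:ℝ)+2)/((n:ℝ)+1))^(n+2) *
            (Complex.abs (branchIter σ ρ μ r n (m+1) z - branchIter σ ρ μ r n m z) / ρ)) := by
          apply mul_le_mul (by gcongr) hd (Complex.abs.nonneg _) (by positivity)
      _ = (N * ((n:ℝ)+1) * (((n:ℝ)+2)/((n:ℝ)+1))^(n+2)) *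
            (q * Complex.abs (branchIter σ ρ μ r n (m+1) z - branchIter σ ρ μ r n m z)) := by
          have hσ' : σ ≠ 0 := hσ.ne'
          have hρ' : ρ ≠ 0 := hρ.ne'
          generalize Complex.abs (branchIter σ ρ μ r n (m+1) z - branchIter σ ρ μ r n m z) = A
          generalize (((n:ℝ)+2)/((n:ℝ)+1))^(n+2) = u
          field_simp
      _ = q * Complex.abs (branchIter σ ρ μ r n (m+1) z - branchIter σ ρ μ r n m z) := by
          rw [id2]; ring
  -- Bound C: geometric distance bound
  have hC : ∀ (z : ℂ) (q : ℝ), 0 ≤ q → q ≤ 1 →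
      Complex.abs ((μ:ℂ)*z/(1 - z/(r:ℂ))) ≤ q*(σ*ρ*N) →
      ∀ m, dist (branchIter σ ρ μ r n m z) (branchIter σ ρ μ r n (m+1) z) ≤ (2*ρ) * q^m := by
    intro z q hq0 hq1 hXq m
    induction m with
    | zero =>
      rw [Complex.dist_eq, Complex.norm_eq_abs, pow_zero, mul_one]
      have h0 : branchIter σ ρ μ r n 0 z = 0 := rfl
      rw [h0, zero_sub, Complex.abs.map_neg]
      refine le_trans (hA z q hq0 hq1 hXq 1) ?_
      rw [div_le_iff₀ hn2]
      nlinarith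
    | succ m ih =>
      rw [Complex.dist_eq, Complex.norm_eq_abs, Complex.abs.map_sub]
      calc Complex.abs (branchIter σ ρ μ r n (m+2) z - branchIter σ ρ μ r n (m+1) z)
          ≤ q * Complex.abs (branchIter σ ρ μ r n (m+1) z - branchIter σ ρ μ r n m z) :=
            hB z q hq0 hq1 hXq m
        _ = q * dist (branchIter σ ρ μ r n m z) (branchIter σ ρ μ r n (m+1) z) := by
            rw [Complex.dist_eq, Complex.norm_eq_abs, Complex.abs.map_sub]
        _ ≤ q * ((2*ρ) * q^m) := by
            exact mul_le_mul_of_nonneg_left ih hq0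
        _ = (2*ρ) * q^(m+1) := by ring
  -- convergence with uniform geometric bound
  have hconv : ∀ (z : ℂ) (q : ℝ), 0 ≤ q → q < 1 →
      Complex.abs ((μ:ℂ)*z/(1 - z/(r:ℂ))) ≤ q*(σ*ρ*N) →
      Tendsto (fun m => branchIter σ ρ μ r n m z) atTop (𝓝 (branchLimit σ ρ μ r n z)) ∧
      ∀ m, dist (branchIter σ ρ μ r n m z) (branchLimit σ ρ μ r n z) ≤ (2*ρ) * q^m / (1-q) := by
    intro z q hq0 hq1 hXq
    have hcs : CauchySeq (fun m => branchIter σ ρ μ r n m z) :=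
      cauchySeq_of_le_geometric q (2*ρ) hq1 (hC z q hq0 hq1.le hXq)
    have ht : Tendsto (fun m => branchIter σ ρ μ r n m z) atTop (𝓝 (branchLimit σ ρ μ r n z)) := by
      unfold branchLimit
      exact hcs.tendsto_limUnder
    exact ⟨ht, fun m => dist_le_of_le_geometric_of_tendsto q (2*ρ) hq1
      (hC z q hq0 hq1.le hXq) ht m⟩
  -- pointwise estimate for h z, with monotone majorant
  have hXle : ∀ (z : ℂ) (s : ℝ), Complex.abs z ≤ s → s < z₀ →
      Complex.abs ((μ:ℂ)*z/(1 - z/(r:ℂ))) ≤ (μ*s/((1-s/r)*(σ*ρ*N)))*(σ*ρ*N) := by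
    intro z s hzs hsz
    have hsr : s < r := lt_trans hsz hz₀r
    have hs0 : 0 ≤ s := le_trans (Complex.abs.nonneg z) hzs
    have hden : 0 < 1 - s/r := by
      rw [sub_pos, div_lt_one hr]; exact hsr
    have hq : (μ*s/((1-s/r)*(σ*ρ*N)))*(σ*ρ*N) = μ*s/(1-s/r) := by
      rw [← div_div, div_mul_cancel₀ _ hM0.ne']
    rw [hq]
    have hzabs : Complex.abs (1 - z/(r:ℂ)) ≥ 1 - s/r := by
      have h2 := norm_sub_norm_le (1:ℂ) (z/(r:ℂ))
      simp only [Complex.norm_eq_abs, map_one] at h2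
      have h3 : Complex.abs (z/(r:ℂ)) ≤ s/r := by
        rw [map_div₀, Complex.abs_ofReal, abs_of_pos hr]
        gcongr
      linarith
    rw [map_div₀, map_mul, Complex.abs_ofReal, abs_of_pos hμ]
    exact div_le_div₀ (mul_nonneg hμ.le hs0) (mul_le_mul_of_nonneg_left hzs hμ.le) hden hzabs
  have hqlt : ∀ s : ℝ, 0 ≤ s → s < z₀ → μ*s/((1-s/r)*(σ*ρ*N)) < 1 := by
    intro s hs0 hsz
    have hsr : s < r := lt_trans hsz hz₀r
    have hden : 0 < 1 - s/r := by rw [sub_pos, div_lt_one hr]; exact hsr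
    rw [div_lt_one (by positivity)]
    rw [hz₀', lt_div_iff₀ (by positivity)] at hsz
    have he : (1-s/r)*(σ*ρ*N) = (r-s)*(σ*ρ*N)/r := by field_simp
    rw [he, lt_div_iff₀ hr]
    linarith
  -- nonnegativity of the pointwise contraction ratio
  have hq0' : ∀ s : ℝ, 0 ≤ s → s < z₀ → 0 ≤ μ*s/((1-s/r)*(σ*ρ*N)) := by
    intro s hs0 hsz
    have hsr : s < r := lt_trans hsz hz₀r
    have hden : 0 < 1 - s/r := by rw [sub_pos, div_lt_one hr]; exact hsr
    positivity
  -- nonvanishing of 1 - z/r on the ball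
  have hden_ne : ∀ z : ℂ, Complex.abs z < z₀ → (1 - z/(r:ℂ)) ≠ 0 := by
    intro z hz h
    rw [sub_eq_zero, eq_div_iff (Complex.ofReal_ne_zero.mpr hr.ne'), one_mul] at h
    rw [← h, Complex.abs_ofReal, abs_of_pos hr] at hz
    linarith
  -- each iterate is differentiable on the ball
  have hdiffW : ∀ m, DifferentiableOn ℂ (branchIter σ ρ μ r n m) (Metric.ball (0:ℂ) z₀) := by
    intro m
    induction m with
    | zero => exact differentiableOn_const 0
    | succ m ih =>
      intro z hz
      have hzabs : Complex.abs z < z₀ := by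
        rwa [mem_ball_zero_iff, Complex.norm_eq_abs] at hz
      have hz0 : 0 ≤ Complex.abs z := Complex.abs.nonneg z
      have hq0 : 0 ≤ μ*(Complex.abs z)/((1-(Complex.abs z)/r)*(σ*ρ*N)) := hq0' _ hz0 hzabs
      have hq1 : μ*(Complex.abs z)/((1-(Complex.abs z)/r)*(σ*ρ*N)) < 1 := hqlt _ hz0 hzabs
      have hXq := hXle z (Complex.abs z) le_rfl hzabs
      have hbm : Complex.abs (branchIter σ ρ μ r n m z) ≤ ρ/((n:ℝ)+2) :=
        le_trans (hA z _ hq0 hq1.le hXq m) (hqbd _ hq1.le)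
      have hne1 : (1 - z/(r:ℂ)) ≠ 0 := hden_ne z hzabs
      have hne2 : (1 - branchIter σ ρ μ r n m z/(ρ:ℂ)) ≠ 0 := hne _ hbm
      have d1 : DifferentiableWithinAt ℂ (fun z : ℂ => (μ:ℂ)*z/(1 - z/(r:ℂ))/(σ:ℂ))
          (Metric.ball (0:ℂ) z₀) z := by
        apply DifferentiableWithinAt.div_const
        apply DifferentiableWithinAt.div
        · exact differentiableWithinAt_id.const_mul _
        · exact (differentiableWithinAt_const _).sub (differentiableWithinAt_id.div_const _)
        · exact hne1
      have d2 : DifferentiableWithinAt ℂ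
          (fun z : ℂ => ((1 - branchIter σ ρ μ r n m z/(ρ:ℂ))^(n+1))⁻¹)
          (Metric.ball (0:ℂ) z₀) z := by
        apply DifferentiableWithinAt.inv
        · exact ((differentiableWithinAt_const _).sub ((ih z hz).div_const _)).pow _
        · exact pow_ne_zero _ hne2
      exact d1.mul d2
  refine ⟨hz₀r, branchLimit σ ρ μ r n, ?_, ?_, ?_⟩
  · -- differentiability of the limit
    have hTLU : TendstoLocallyUniformlyOn (fun m => branchIter σ ρ μ r n m)
        (branchLimit σ ρ μ r n) atTop (Metric.ball (0:ℂ) z₀) := by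
      rw [Metric.tendstoLocallyUniformlyOn_iff]
      intro ε hε x hx
      have hxabs : Complex.abs x < z₀ := by
        rwa [mem_ball_zero_iff, Complex.norm_eq_abs] at hx
      have hxs : Complex.abs x < (Complex.abs x + z₀)/2 := by linarith
      have hsz : (Complex.abs x + z₀)/2 < z₀ := by linarith
      have hs0 : 0 ≤ (Complex.abs x + z₀)/2 := by
        have := Complex.abs.nonneg x; linarith
      have hq0 : 0 ≤ μ*((Complex.abs x + z₀)/2)/((1-((Complex.abs x + z₀)/2)/r)*(σ*ρ*N)) :=
        hq0' _ hs0 hsz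
      have hq1 : μ*((Complex.abs x + z₀)/2)/((1-((Complex.abs x + z₀)/2)/r)*(σ*ρ*N)) < 1 :=
        hqlt _ hs0 hsz
      refine ⟨Metric.ball (0:ℂ) ((Complex.abs x + z₀)/2) ∩ Metric.ball (0:ℂ) z₀,
        Filter.inter_mem (mem_nhdsWithin_of_mem_nhds (Metric.isOpen_ball.mem_nhds
          (by rwa [mem_ball_zero_iff, Complex.norm_eq_abs]))) self_mem_nhdsWithin, ?_⟩
      have hten : Tendsto
          (fun m : ℕ => (2*ρ) * (μ*((Complex.abs x + z₀)/2)/((1-((Complex.abs x + z₀)/2)/r)*(σ*ρ*N)))^m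
            / (1-(μ*((Complex.abs x + z₀)/2)/((1-((Complex.abs x + z₀)/2)/r)*(σ*ρ*N))))) atTop (𝓝 0) := by
        have h := tendsto_pow_atTop_nhds_zero_of_lt_one hq0 hq1
        have h2 := (h.const_mul (2*ρ)).div_const
          (1-(μ*((Complex.abs x + z₀)/2)/((1-((Complex.abs x + z₀)/2)/r)*(σ*ρ*N))))
        simpa using h2
      filter_upwards [hten.eventually (gt_mem_nhds hε)] with m hm y hy
      obtain ⟨hy1, _⟩ := hy
      have hyabs : Complex.abs y ≤ (Complex.abs x + z₀)/2 := by
        rw [mem_ball_zero_iff, Complex.norm_eq_abs] at hy1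
        exact hy1.le
      have hXy := hXle y _ hyabs hsz
      have hc := (hconv y _ hq0 hq1 hXy).2 m
      rw [dist_comm]
      exact lt_of_le_of_lt hc hm
    exact hTLU.differentiableOn (Filter.Eventually.of_forall hdiffW) Metric.isOpen_ball
  · -- value at 0
    have h0 : ∀ m, branchIter σ ρ μ r n m 0 = 0 := by
      intro m
      induction m with
      | zero => rfl
      | succ m _ =>
        show (μ:ℂ)*0/(1 - 0/(r:ℂ))/(σ:ℂ) * _ = 0
        simp
    show limUnder atTop (fun m => branchIter σ ρ μ r n m 0) = 0
    rw [funext h0]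
    exact Filter.Tendsto.limUnder_eq tendsto_const_nhds
  · -- the algebraic equation
    intro z hz
    have hzabs : Complex.abs z < z₀ := by
      rwa [mem_ball_zero_iff, Complex.norm_eq_abs] at hz
    have hz0 : 0 ≤ Complex.abs z := Complex.abs.nonneg z
    have hq0 : 0 ≤ μ*(Complex.abs z)/((1-(Complex.abs z)/r)*(σ*ρ*N)) := hq0' _ hz0 hzabs
    have hq1 : μ*(Complex.abs z)/((1-(Complex.abs z)/r)*(σ*ρ*N)) < 1 := hqlt _ hz0 hzabs
    have hXq := hXle z (Complex.abs z) le_rfl hzabs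
    obtain ⟨ht, _⟩ := hconv z _ hq0 hq1 hXq
    have hwb : Complex.abs (branchLimit σ ρ μ r n z) ≤ ρ/((n:ℝ)+2) := by
      have habs : Tendsto (fun m => Complex.abs (branchIter σ ρ μ r n m z)) atTop
          (𝓝 (Complex.abs (branchLimit σ ρ μ r n z))) :=
        (Complex.continuous_abs.tendsto _).comp ht
      apply le_of_tendsto habs
      filter_upwards with m
      exact le_trans (hA z _ hq0 hq1.le hXq m) (hqbd _ hq1.le)
    have hne1 : (1 - z/(r:ℂ)) ≠ 0 := hden_ne z hzabs
    have hne2 : (1 - branchLimit σ ρ μ r n z/(ρ:ℂ)) ≠ 0 := hne _ hwb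
    have hP : ((1 - branchLimit σ ρ μ r n z/(ρ:ℂ))^(n+1)) ≠ 0 := pow_ne_zero _ hne2
    have hσc : (σ:ℂ) ≠ 0 := Complex.ofReal_ne_zero.mpr hσ.ne'
    have hfix : branchLimit σ ρ μ r n z = (μ:ℂ)*z/(1 - z/(r:ℂ))/(σ:ℂ) *
        ((1 - branchLimit σ ρ μ r n z/(ρ:ℂ))^(n+1))⁻¹ := by
      have ht1 : Tendsto (fun m => branchIter σ ρ μ r n (m+1) z) atTop
          (𝓝 (branchLimit σ ρ μ r n z)) := ht.comp (tendsto_add_atTop_nat 1)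
      have ht2 : Tendsto (fun m => (μ:ℂ)*z/(1 - z/(r:ℂ))/(σ:ℂ) *
          ((1 - branchIter σ ρ μ r n m z/(ρ:ℂ))^(n+1))⁻¹) atTop
          (𝓝 ((μ:ℂ)*z/(1 - z/(r:ℂ))/(σ:ℂ) *
            ((1 - branchLimit σ ρ μ r n z/(ρ:ℂ))^(n+1))⁻¹)) := by
        apply Tendsto.const_mul
        apply Tendsto.inv₀
        · exact (tendsto_const_nhds.sub (ht.div_const _)).pow _
        · exact hP
      exact tendsto_nhds_unique ht1 ht2
    show (σ:ℂ) * branchLimit σ ρ μ r n z * (1 - branchLimit σ ρ μ r n z/(ρ:ℂ))^(n+1)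
        = (μ:ℂ)*z/(1 - z/(r:ℂ))
    nth_rewrite 1 [hfix]
    field_simp
end
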